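/- arXiv:2602.06666 — 6 statements merged into one kernel-verified Lean document; each statement's English description precedes it below -/
import Mathlib

section
/- Let H be a complex Hilbert space, P a bounded linear operator on H, and ε a real number with 0 < ε < 1/4 such that ‖P² − P‖ < ε. Then for every ξ ∈ ℂ with |ξ − 1| = 2ε, the operator ξ·I − P is invertible and ‖(ξ·I − P)⁻¹‖ < (‖P‖ + 2ε) / (ε(1 − 4ε)). -/
open Complex

/-- Resolvent estimate: if `‖P² − P‖ < ε` with `0 < ε < 1/4`, then for every `ξ ∈ ℂ` with
`|ξ − 1| = 2ε` the operator `ξ·I − P` is invertible and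
`‖(ξ·I − P)⁻¹‖ < (‖P‖ + 2ε)/(ε(1 − 4ε))`. -/
theorem stmt4 {H : Type*} [NormedAddCommGroup H] [InnerProductSpace ℂ H] [CompleteSpace H]
    (P : H →L[ℂ] H) (ε : ℝ) (hε0 : 0 < ε) (hε : ε < 1 / 4)
    (hP : ‖P ^ 2 - P‖ < ε) :
    ∀ ξ : ℂ, ‖ξ - 1‖ = 2 * ε →
      IsUnit (ξ • (1 : H →L[ℂ] H) - P) ∧
      ‖Ring.inverse (ξ • (1 : H →L[ℂ] H) - P)‖ < (‖P‖ + 2 * ε) / (ε * (1 - 4 * ε)) := by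
  intro ξ hξ
  have hP0 : (0:ℝ) ≤ ‖P ^ 2 - P‖ := norm_nonneg _
  have hξnorm : (1 : ℝ) - 2 * ε ≤ ‖ξ‖ := by
    have := norm_sub_norm_le (1 : ℂ) (1 - ξ)
    simp only [norm_one, sub_sub_cancel] at this
    rw [norm_sub_rev] at this
    linarith [this, hξ.le]
  set w : ℂ := ξ * (1 - ξ) with hw
  have hwnorm : ‖w‖ = ‖ξ‖ * (2 * ε) := by
    rw [hw, norm_mul, norm_sub_rev, hξ]
  have hwlb : 2 * ε * (1 - 2 * ε) ≤ ‖w‖ := by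
    rw [hwnorm]; nlinarith
  have hεw : ε < ‖w‖ := by nlinarith
  have hwpos : (0:ℝ) < ‖w‖ := by linarith
  have hw0 : w ≠ 0 := by
    intro h; rw [h, norm_zero] at hεw; linarith
  set t : H →L[ℂ] H := -(w⁻¹ • (P ^ 2 - P)) with hts
  have htnorm : ‖t‖ = ‖w‖⁻¹ * ‖P ^ 2 - P‖ := by
    rw [hts, norm_neg, norm_smul, norm_inv]
  have ht : ‖t‖ < 1 := by
    rw [htnorm, inv_mul_lt_iff₀ hwpos, mul_one]
    linarith
  set u : H →L[ℂ] H := ξ • 1 - P with hus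
  set v : H →L[ℂ] H := (1 - ξ) • 1 - P with hvs
  have hw0' : ξ * (1 - ξ) ≠ 0 := hw ▸ hw0
  have hfact : u * v = w • (1 - t) := by
    rw [hus, hvs, hts, hw]
    simp only [smul_sub, smul_smul, sub_neg_eq_add, smul_add, mul_inv_cancel₀ hw0', one_smul]
    simp only [sub_mul, mul_sub, smul_mul_assoc, mul_smul_comm, one_mul, mul_one, ← pow_two,
      smul_smul]
    module
  have hfact' : v * u = w • (1 - t) := by
    rw [hus, hvs, hts, hw]
    simp only [smul_sub, smul_smul, sub_neg_eq_add, smul_add, mul_inv_cancel₀ hw0', one_smul]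
    simp only [sub_mul, mul_sub, smul_mul_assoc, mul_smul_comm, one_mul, mul_one, ← pow_two,
      smul_smul]
    module
  have hunit : IsUnit ((1:H →L[ℂ] H) - t) := isUnit_one_sub_of_norm_lt_one ht
  set Binv : H →L[ℂ] H := w⁻¹ • Ring.inverse (1 - t) with hBinv
  have hB1 : (w • ((1:H →L[ℂ] H) - t)) * Binv = 1 := by
    rw [hBinv, smul_mul_smul_comm, mul_inv_cancel₀ hw0, one_smul,
      Ring.mul_inverse_cancel _ hunit]
  have hB2 : Binv * (w • ((1:H →L[ℂ] H) - t)) = 1 := by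
    rw [hBinv, smul_mul_smul_comm, inv_mul_cancel₀ hw0, one_smul,
      Ring.inverse_mul_cancel _ hunit]
  have hcomm : v * Binv = Binv * v := by
    have huv : u * v = v * u := hfact.trans hfact'.symm
    have h1 : v * (w • ((1:H→L[ℂ] H) - t)) = (w • ((1:H→L[ℂ] H) - t)) * v := by
      rw [← hfact, ← mul_assoc, ← huv, mul_assoc]
    calc v * Binv = (Binv * (w • ((1:H→L[ℂ] H) - t))) * (v * Binv) := by rw [hB2, one_mul]
      _ = Binv * ((v * (w • ((1:H→L[ℂ] H) - t))) * Binv) := by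
          rw [h1]; simp only [mul_assoc]
      _ = Binv * v := by rw [mul_assoc v, hB1, mul_one]
  have hu1 : u * (v * Binv) = 1 := by rw [← mul_assoc, hfact, hB1]
  have hu2 : (v * Binv) * u = 1 := by rw [hcomm, mul_assoc, hfact', hB2]
  have hU : IsUnit u := ⟨⟨u, v * Binv, hu1, hu2⟩, rfl⟩
  refine ⟨hU, ?_⟩
  have hinv : Ring.inverse u = v * Binv := by
    rw [Ring.inverse_unit ⟨u, v * Binv, hu1, hu2⟩]; rfl
  rw [hinv]
  have hone : ‖(1 : H →L[ℂ] H)‖ ≤ 1 := ContinuousLinearMap.norm_id_le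
  have hvnorm : ‖v‖ ≤ ‖P‖ + 2 * ε := by
    calc ‖v‖ ≤ ‖(1 - ξ) • (1:H→L[ℂ] H)‖ + ‖P‖ := norm_sub_le _ _
      _ ≤ ‖(1-ξ)‖ * 1 + ‖P‖ := by
          rw [norm_smul]; gcongr
      _ = ‖P‖ + 2 * ε := by rw [norm_sub_rev, hξ]; ring
  have hgeom : ‖Ring.inverse ((1:H→L[ℂ] H) - t)‖ ≤ (1 - ‖t‖)⁻¹ := by
    rw [← geom_series_eq_inverse t ht]
    calc ‖∑' n : ℕ, t ^ n‖ ≤ ‖(1:H→L[ℂ] H)‖ - 1 + (1 - ‖t‖)⁻¹ :=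
          tsum_geometric_le_of_norm_lt_one t ht
      _ ≤ (1 - ‖t‖)⁻¹ := by linarith
  have hBnorm : ‖Binv‖ ≤ (‖w‖ - ‖P ^ 2 - P‖)⁻¹ := by
    have key : ‖w‖ * (1 - ‖t‖) = ‖w‖ - ‖P ^ 2 - P‖ := by
      rw [htnorm, mul_sub, mul_one, mul_inv_cancel_left₀ (ne_of_gt hwpos)]
    rw [hBinv, norm_smul, norm_inv, ← key, mul_inv]
    exact mul_le_mul_of_nonneg_left hgeom (by positivity)
  have hdenom : 0 < ε * (1 - 4 * ε) := by nlinarith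
  have hstrict : (‖w‖ - ‖P ^ 2 - P‖)⁻¹ < (ε * (1 - 4 * ε))⁻¹ := by
    apply inv_strictAnti₀ hdenom
    nlinarith
  have hBlt : ‖Binv‖ < (ε * (1 - 4 * ε))⁻¹ := lt_of_le_of_lt hBnorm hstrict
  calc ‖v * Binv‖ ≤ ‖v‖ * ‖Binv‖ := norm_mul_le _ _
    _ ≤ (‖P‖ + 2*ε) * ‖Binv‖ := mul_le_mul_of_nonneg_right hvnorm (norm_nonneg _)
    _ < (‖P‖ + 2*ε) * (ε * (1 - 4 * ε))⁻¹ :=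
        mul_lt_mul_of_pos_left hBlt (by positivity)
    _ = (‖P‖ + 2 * ε) / (ε * (1 - 4 * ε)) := by rw [div_eq_mul_inv]
end

section
/- Let H be a complex Hilbert space, P a bounded linear operator on H, and ε a real number with 0 < ε < 1/4 such that ‖P² − P‖ < ε. Then for every ξ on the circle {ξ ∈ ℂ : |ξ − 1| = 2ε} the operator ξ·I − P is invertible, and the operator Θ(P) := (1/(2πi)) ∮_{|ξ−1|=2ε} (ξ·I − P)⁻¹ dξ (the circle integral over the circle of center 1 and radius 2ε, traversed counterclockwise) is an idempotent: Θ(P)² = Θ(P). -/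
open Complex Metric Set MeasureTheory Function

section aux

variable {A : Type*} [NormedRing A] [NormedAlgebra ℂ A] [CompleteSpace A]

private lemma aux_expand (P : A) (ξ : ℂ) :
    (ξ • (1 : A) - P) * ((ξ - 1) • (1 : A) + P) = (ξ * (ξ - 1)) • (1 : A) + (P - P ^ 2) := by
  simp only [sub_mul, mul_add, smul_mul_assoc, mul_smul_comm, one_mul, mul_one, smul_smul,
    pow_two]
  module

private lemma aux_expand' (P : A) (ξ : ℂ) :
    ((ξ - 1) • (1 : A) + P) * (ξ • (1 : A) - P) = (ξ * (ξ - 1)) • (1 : A) + (P - P ^ 2) := by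
  simp only [sub_mul, mul_add, add_mul, mul_sub, smul_mul_assoc, mul_smul_comm, one_mul, mul_one,
    smul_smul, pow_two]
  module

private lemma aux_isUnit (P : A) {ξ : ℂ} (h : ‖P - P ^ 2‖ < ‖ξ * (ξ - 1)‖) :
    ξ ∈ resolventSet ℂ P := by
  set c : ℂ := ξ * (ξ - 1) with hc
  have hc0 : c ≠ 0 := by
    intro h0
    rw [h0, norm_zero] at h
    exact (norm_nonneg _).not_gt h
  have hball : ‖-(c⁻¹ • (P - P ^ 2))‖ < 1 := by
    rw [norm_neg, norm_smul, norm_inv, ← div_eq_inv_mul, div_lt_one (norm_pos_iff.mpr hc0)]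
    exact h
  have key : IsUnit ((ξ • (1 : A) - P) * ((ξ - 1) • (1 : A) + P)) := by
    rw [aux_expand]
    have hval : c • (1 : A) + (P - P ^ 2) = c • ↑(Units.oneSub _ hball) := by
      rw [Units.val_oneSub, sub_neg_eq_add, smul_add, smul_smul, mul_inv_cancel₀ hc0, one_smul]
    rw [hval, Algebra.smul_def]
    exact ((isUnit_iff_ne_zero.2 hc0).map (algebraMap ℂ A)).mul (Units.isUnit _)
  have hcomm : Commute (ξ • (1 : A) - P) ((ξ - 1) • (1 : A) + P) :=
    (aux_expand P ξ).trans (aux_expand' P ξ).symm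
  rw [spectrum.mem_resolventSet_iff, Algebra.algebraMap_eq_smul_one]
  exact (hcomm.isUnit_mul_iff.mp key).1

private lemma aux_resolvent_identity (P : A) {ξ η : ℂ} (hξ : ξ ∈ resolventSet ℂ P)
    (hη : η ∈ resolventSet ℂ P) (hne : η ≠ ξ) :
    resolvent P η * resolvent P ξ = (η - ξ)⁻¹ • (resolvent P ξ - resolvent P η) := by
  have key : resolvent P ξ - resolvent P η = (η - ξ) • (resolvent P η * resolvent P ξ) := by
    have h1 : Ring.inverse (algebraMap ℂ A η - P) * (algebraMap ℂ A η - P) = 1 :=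
      Ring.inverse_mul_cancel _ hη
    have h2 : (algebraMap ℂ A ξ - P) * Ring.inverse (algebraMap ℂ A ξ - P) = 1 :=
      Ring.mul_inverse_cancel _ hξ
    have hdiff : (algebraMap ℂ A η - P) - (algebraMap ℂ A ξ - P) = (η - ξ) • (1 : A) := by
      simp only [Algebra.algebraMap_eq_smul_one]
      module
    have e1 : Ring.inverse (algebraMap ℂ A η - P) * (algebraMap ℂ A η - P) *
        Ring.inverse (algebraMap ℂ A ξ - P) = Ring.inverse (algebraMap ℂ A ξ - P) := by
      rw [h1, one_mul]
    have e2 : Ring.inverse (algebraMap ℂ A η - P) * (algebraMap ℂ A ξ - P) *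
        Ring.inverse (algebraMap ℂ A ξ - P) = Ring.inverse (algebraMap ℂ A η - P) := by
      rw [mul_assoc, h2, mul_one]
    calc resolvent P ξ - resolvent P η
        = resolvent P η * ((algebraMap ℂ A η - P) - (algebraMap ℂ A ξ - P)) * resolvent P ξ := by
          simp only [resolvent]
          rw [mul_sub, sub_mul, e1, e2]
      _ = (η - ξ) • (resolvent P η * resolvent P ξ) := by
          rw [hdiff, mul_smul_comm, smul_mul_assoc, mul_one]
  rw [key, inv_smul_smul₀ (sub_ne_zero.2 hne)]

private lemma aux_circleIntegral_mul_right {f : ℂ → A} {c : ℂ} {R : ℝ}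
    (hf : CircleIntegrable f c R) (a : A) :
    (∮ z in C(c, R), f z) * a = ∮ z in C(c, R), f z * a := by
  have h := ((ContinuousLinearMap.mul ℂ A).flip a).intervalIntegral_comp_comm hf.out
  simp only [ContinuousLinearMap.map_smul, ContinuousLinearMap.flip_apply,
    ContinuousLinearMap.mul_apply'] at h
  simpa only [circleIntegral, smul_mul_assoc, ContinuousLinearMap.smul_apply,
    ContinuousLinearMap.mul_apply'] using h.symm

private lemma aux_circleIntegral_mul_left {f : ℂ → A} {c : ℂ} {R : ℝ}
    (hf : CircleIntegrable f c R) (a : A) :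
    a * (∮ z in C(c, R), f z) = ∮ z in C(c, R), a * f z := by
  have h := (ContinuousLinearMap.mul ℂ A a).intervalIntegral_comp_comm hf.out
  simp only [ContinuousLinearMap.map_smul, ContinuousLinearMap.mul_apply'] at h
  simpa only [circleIntegral, mul_smul_comm] using h.symm

end aux

section swap

variable {E : Type*} [NormedAddCommGroup E] [NormedSpace ℝ E]

private lemma aux_intervalIntegral_swap {G : ℝ → ℝ → E} (hG : Continuous (uncurry G))
    {a b : ℝ} (hab : a ≤ b) :
    ∫ s in a..b, ∫ t in a..b, G t s = ∫ t in a..b, ∫ s in a..b, G t s := by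
  simp only [intervalIntegral.integral_of_le hab]
  have hint : Integrable (uncurry fun s t => G t s)
      ((volume.restrict (Ioc a b)).prod (volume.restrict (Ioc a b))) := by
    rw [Measure.prod_restrict]
    have hcont : Continuous (uncurry fun s t => G t s) := hG.comp continuous_swap
    have h1 : IntegrableOn (uncurry fun s t => G t s) (Icc a b ×ˢ Icc a b)
        (volume.prod volume) := by
      rw [← Measure.volume_eq_prod]
      exact hcont.continuousOn.integrableOn_compact (isCompact_Icc.prod isCompact_Icc)
    rw [← Measure.volume_eq_prod] at h1 ⊢
    exact h1.mono_set (prod_mono Ioc_subset_Icc_self Ioc_subset_Icc_self)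
  exact MeasureTheory.integral_integral_swap hint

end swap

section swap2

variable {E : Type*} [NormedAddCommGroup E] [NormedSpace ℂ E]

private lemma aux_circleIntegral_swap {F : ℂ → ℂ → E} {c₁ c₂ : ℂ} {R₁ R₂ : ℝ}
    (hF : Continuous fun p : ℝ × ℝ => F (circleMap c₁ R₁ p.1) (circleMap c₂ R₂ p.2)) :
    (∮ w in C(c₂, R₂), ∮ z in C(c₁, R₁), F z w) =
      ∮ z in C(c₁, R₁), ∮ w in C(c₂, R₂), F z w := by
  simp only [circleIntegral, ← intervalIntegral.integral_smul]
  have hG : Continuous (uncurry fun t s : ℝ =>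
      deriv (circleMap c₂ R₂) s • deriv (circleMap c₁ R₁) t • F (circleMap c₁ R₁ t)
        (circleMap c₂ R₂ s)) := by
    simp only [deriv_circleMap]
    apply Continuous.smul
    · exact ((continuous_circleMap 0 R₂).comp continuous_snd).mul continuous_const
    · apply Continuous.smul
      · exact ((continuous_circleMap 0 R₁).comp continuous_fst).mul continuous_const
      · exact hF
  have := aux_intervalIntegral_swap (G := fun t s =>
      deriv (circleMap c₂ R₂) s • deriv (circleMap c₁ R₁) t • F (circleMap c₁ R₁ t)
        (circleMap c₂ R₂ s)) hG Real.two_pi_pos.le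
  rw [this]
  refine intervalIntegral.integral_congr fun t _ => ?_
  refine intervalIntegral.integral_congr fun s _ => ?_
  rw [smul_comm]

end swap2

/-- Riesz projection: if `‖P² − P‖ < ε` with `0 < ε < 1/4`, then `ξ·I − P` is invertible
for every `ξ` on the circle of center `1` and radius `2ε`, and the Riesz projection
`Θ(P) = (2πi)⁻¹ ∮_{|ξ−1|=2ε} (ξ·I − P)⁻¹ dξ` is an idempotent. -/
theorem stmt5 {H : Type*} [NormedAddCommGroup H] [InnerProductSpace ℂ H] [CompleteSpace H]
    (P : H →L[ℂ] H) (ε : ℝ) (hε0 : 0 < ε) (hε : ε < 1 / 4)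
    (hP : ‖P ^ 2 - P‖ < ε) :
    (∀ ξ : ℂ, ‖ξ - 1‖ = 2 * ε → IsUnit (ξ • (1 : H →L[ℂ] H) - P)) ∧
    (let Θ : H →L[ℂ] H :=
      (2 * Real.pi * Complex.I : ℂ)⁻¹ •
        (∮ ξ in C(1, 2 * ε), Ring.inverse (ξ • (1 : H →L[ℂ] H) - P));
     Θ * Θ = Θ) := by
  have hQ : ‖P - P ^ 2‖ < ε := by rwa [norm_sub_rev]
  have hres : ∀ ξ : ℂ, 2 * ε ≤ ‖ξ - 1‖ → ‖ξ - 1‖ ≤ 1 / 4 + ε → ξ ∈ resolventSet ℂ P := by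
    intro ξ h1 h2
    apply aux_isUnit
    refine hQ.trans_le ?_
    have hξn : 1 - ‖ξ - 1‖ ≤ ‖ξ‖ := by
      have h3 := norm_sub_norm_le (1 : ℂ) ξ
      have h4 : ‖(1 : ℂ) - ξ‖ = ‖ξ - 1‖ := norm_sub_rev _ _
      simp only [norm_one] at h3
      linarith
    rw [norm_mul]
    have hs0 : (0 : ℝ) ≤ ‖ξ - 1‖ := norm_nonneg _
    nlinarith [mul_le_mul_of_nonneg_right hξn hs0,
      mul_nonneg (by linarith : (0:ℝ) ≤ ‖ξ - 1‖ - 2 * ε)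
        (by linarith : (0:ℝ) ≤ 1 / 4 + ε - ‖ξ - 1‖),
      mul_nonneg (by linarith : (0:ℝ) ≤ 3 / 4 - 3 * ε)
        (by linarith : (0:ℝ) ≤ ‖ξ - 1‖ - 2 * ε)]
  constructor
  · intro ξ hξ
    have h := hres ξ (le_of_eq hξ.symm) (by rw [hξ]; linarith)
    rwa [spectrum.mem_resolventSet_iff, Algebra.algebraMap_eq_smul_one] at h
  · have hfun : (fun ξ : ℂ => Ring.inverse (ξ • (1 : H →L[ℂ] H) - P)) = resolvent P := by
      funext ξ
      simp only [resolvent, Algebra.algebraMap_eq_smul_one]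
    intro Θ
    show ((2 * Real.pi * Complex.I : ℂ)⁻¹ •
        (∮ ξ in C(1, 2 * ε), Ring.inverse (ξ • (1 : H →L[ℂ] H) - P))) *
        ((2 * Real.pi * Complex.I : ℂ)⁻¹ •
        (∮ ξ in C(1, 2 * ε), Ring.inverse (ξ • (1 : H →L[ℂ] H) - P))) =
        (2 * Real.pi * Complex.I : ℂ)⁻¹ •
        (∮ ξ in C(1, 2 * ε), Ring.inverse (ξ • (1 : H →L[ℂ] H) - P))
    rw [hfun]
    set r' : ℝ := 1 / 4 + ε with hr'def
    have hr0 : (0 : ℝ) < 2 * ε := by linarith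
    have hrr' : 2 * ε < r' := by rw [hr'def]; linarith
    have hr'0 : (0 : ℝ) < r' := lt_trans hr0 hrr'
    have hdiff : ∀ z : ℂ, 2 * ε ≤ ‖z - 1‖ → ‖z - 1‖ ≤ r' →
        DifferentiableAt ℂ (resolvent P) z := fun z h1 h2 =>
      (spectrum.hasDerivAt_resolvent (hres z h1 h2)).differentiableAt
    have hsphere : ∀ {R : ℝ} {z : ℂ}, z ∈ sphere (1 : ℂ) R → ‖z - 1‖ = R := by
      intro R z hz
      rwa [mem_sphere_iff_norm] at hz
    -- circle integrability on both circles
    have hcont1 : ContinuousOn (resolvent P) (sphere (1 : ℂ) (2 * ε)) := fun z hz =>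
      ((hdiff z (hsphere hz).ge (by rw [hsphere hz]; exact hrr'.le)).continuousAt).continuousWithinAt
    have hcont2 : ContinuousOn (resolvent P) (sphere (1 : ℂ) r') := fun z hz =>
      ((hdiff z (by rw [hsphere hz]; exact hrr'.le) (hsphere hz).le).continuousAt).continuousWithinAt
    have hint1 : CircleIntegrable (resolvent P) 1 (2 * ε) :=
      hcont1.circleIntegrable hr0.le
    have hint2 : CircleIntegrable (resolvent P) 1 r' :=
      hcont2.circleIntegrable hr'0.le
    set I₁ : H →L[ℂ] H := ∮ ξ in C(1, 2 * ε), resolvent P ξ with hI₁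
    -- radius independence
    have hrad : (∮ ξ in C(1, r'), resolvent P ξ) = I₁ := by
      refine circleIntegral_eq_of_differentiable_on_annulus_off_countable hr0 hrr'.le
        countable_empty (fun z hz => ?_) (fun z hz => ?_)
      · rw [mem_diff, mem_closedBall, mem_ball, dist_eq_norm, not_lt] at hz
        exact ((hdiff z hz.2 hz.1).continuousAt).continuousWithinAt
      · rw [mem_diff, mem_diff, mem_ball, mem_closedBall, dist_eq_norm, not_le] at hz
        exact hdiff z hz.1.2.le hz.1.1.le
    -- the key multiplicative identity
    have key : I₁ * I₁ = (2 * Real.pi * Complex.I : ℂ) • I₁ := by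
      have inner : ∀ η : ℂ, η ∈ sphere (1 : ℂ) r' →
          resolvent P η * I₁ = ∮ ξ in C(1, 2 * ε), (η - ξ)⁻¹ • resolvent P ξ := by
        intro η hη
        have hηn : ‖η - 1‖ = r' := hsphere hη
        have hηres : η ∈ resolventSet ℂ P := hres η (by rw [hηn]; exact hrr'.le) hηn.le
        have hne : ∀ ξ : ℂ, ξ ∈ sphere (1 : ℂ) (2 * ε) → η ≠ ξ := by
          intro ξ hξ he
          have := hsphere hξ
          rw [← he, hηn] at this
          exact absurd this (ne_of_gt hrr')
        have hnesub : ∀ ξ : ℂ, ξ ∈ sphere (1 : ℂ) (2 * ε) → η - ξ ≠ 0 := fun ξ hξ =>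
          sub_ne_zero.2 (hne ξ hξ)
        rw [hI₁, aux_circleIntegral_mul_left hint1]
        have step1 : (∮ ξ in C(1, 2 * ε), resolvent P η * resolvent P ξ) =
            ∮ ξ in C(1, 2 * ε), ((η - ξ)⁻¹ • resolvent P ξ - (η - ξ)⁻¹ • resolvent P η) := by
          refine circleIntegral.integral_congr hr0.le fun ξ hξ => ?_
          have hξres : ξ ∈ resolventSet ℂ P :=
            hres ξ (hsphere hξ).ge (by rw [hsphere hξ]; exact hrr'.le)
          rw [aux_resolvent_identity P hξres hηres (hne ξ hξ), smul_sub]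
        have hia : CircleIntegrable (fun ξ : ℂ => (η - ξ)⁻¹ • resolvent P ξ) 1 (2 * ε) := by
          refine ContinuousOn.circleIntegrable hr0.le ?_
          exact ((continuousOn_const.sub continuousOn_id).inv₀ hnesub).smul hcont1
        have hib : CircleIntegrable (fun ξ : ℂ => (η - ξ)⁻¹ • resolvent P η) 1 (2 * ε) := by
          refine ContinuousOn.circleIntegrable hr0.le ?_
          exact ((continuousOn_const.sub continuousOn_id).inv₀ hnesub).smul continuousOn_const
        rw [step1, circleIntegral.integral_sub hia hib]
        have hden : ∀ w ∈ closedBall (1 : ℂ) (2 * ε), η - w ≠ 0 := by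
          intro w hw
          rw [mem_closedBall, dist_eq_norm] at hw
          refine sub_ne_zero.2 fun he => ?_
          rw [← he, hηn] at hw
          linarith
        have hzero : (∮ ξ in C(1, 2 * ε), (η - ξ)⁻¹) = 0 := by
          refine circleIntegral_eq_zero_of_differentiable_on_off_countable hr0.le
            countable_empty ?_ (fun z hz => ?_)
          · exact ContinuousOn.inv₀
              ((continuous_const.sub continuous_id).continuousOn) hden
          · rw [mem_diff, mem_ball, dist_eq_norm] at hz
            exact ((differentiableAt_const η).sub differentiableAt_id).inv
              (hden z (by rw [mem_closedBall, dist_eq_norm]; exact hz.1.le))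
        rw [circleIntegral.integral_smul_const, hzero, zero_smul, sub_zero]
      calc I₁ * I₁ = (∮ η in C(1, r'), resolvent P η) * I₁ := by rw [hrad]
        _ = ∮ η in C(1, r'), resolvent P η * I₁ := aux_circleIntegral_mul_right hint2 I₁
        _ = ∮ η in C(1, r'), ∮ ξ in C(1, 2 * ε), (η - ξ)⁻¹ • resolvent P ξ :=
            circleIntegral.integral_congr hr'0.le fun η hη => inner η hη
        _ = ∮ ξ in C(1, 2 * ε), ∮ η in C(1, r'), (η - ξ)⁻¹ • resolvent P ξ := by
            refine aux_circleIntegral_swap (F := fun ξ η => (η - ξ)⁻¹ • resolvent P ξ) ?_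
            have hc1 : Continuous fun t : ℝ => resolvent P (circleMap 1 (2 * ε) t) :=
              hcont1.comp_continuous (continuous_circleMap _ _)
                (fun t => circleMap_mem_sphere (1 : ℂ) hr0.le t)
            refine Continuous.smul (f := fun p : ℝ × ℝ => (circleMap 1 r' p.2 - circleMap 1 (2 * ε) p.1)⁻¹) ?_ (hc1.comp continuous_fst)
            refine Continuous.inv₀ ?_ ?_
            · exact ((continuous_circleMap _ _).comp continuous_snd).sub
                ((continuous_circleMap _ _).comp continuous_fst)
            · intro p
              refine sub_ne_zero.2 fun he => ?_
              have h1 := hsphere (circleMap_mem_sphere (1 : ℂ) hr'0.le p.2)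
              have h2 := hsphere (circleMap_mem_sphere (1 : ℂ) hr0.le p.1)
              rw [he, h2] at h1
              linarith
        _ = ∮ ξ in C(1, 2 * ε), (2 * Real.pi * Complex.I : ℂ) • resolvent P ξ := by
            refine circleIntegral.integral_congr hr0.le fun ξ hξ => ?_
            rw [circleIntegral.integral_smul_const,
              circleIntegral.integral_sub_inv_of_mem_ball (by
                rw [mem_ball, dist_eq_norm, hsphere hξ]; exact hrr')]
        _ = (2 * Real.pi * Complex.I : ℂ) • I₁ := circleIntegral.integral_smul _ _ _ _
    rw [smul_mul_assoc, mul_smul_comm, smul_smul, key, smul_smul]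
    congr 1
    rw [mul_assoc, inv_mul_cancel₀ Complex.two_pi_I_ne_zero, mul_one]
end

section
/- Let H be a complex Hilbert space, P a bounded linear operator on H, and ε a real number with 0 < ε < 1/4 such that ‖P² − P‖ < ε. Then ξ·I − P is invertible for every ξ with |ξ| = 2ε and for every ξ with |ξ − 1| = 2ε, and P = (1/(2πi)) ∮_{|ξ|=2ε} ξ (ξ·I − P)⁻¹ dξ + (1/(2πi)) ∮_{|ξ−1|=2ε} ξ (ξ·I − P)⁻¹ dξ, where both circle integrals are taken counterclockwise over the circles of radius 2ε centered at 0 and at 1 respectively. -/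
open Complex Metric

noncomputable section
set_option linter.unusedSectionVars false

namespace Stmt6Aux

variable {A : Type*} [NormedRing A] [NormedAlgebra ℂ A] [CompleteSpace A]

lemma ring_inverse_eq {a b : A} (h : IsUnit a) (hab : a * b = 1) :
    Ring.inverse a = b := by
  obtain ⟨u, rfl⟩ := h
  rw [Ring.inverse_unit]
  calc (↑u⁻¹ : A) = ↑u⁻¹ * (↑u * b) := by rw [hab, mul_one]
  _ = b := by rw [← mul_assoc, Units.inv_mul, one_mul]

lemma factor (P : A) (ξ : ℂ) :
    (ξ • (1 : A) - P) * ((ξ - 1) • (1 : A) + P) = (ξ * (ξ - 1)) • (1 : A) - (P * P - P) ∧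
    ((ξ - 1) • (1 : A) + P) * (ξ • (1 : A) - P) = (ξ * (ξ - 1)) • (1 : A) - (P * P - P) := by
  constructor <;>
  · simp only [sub_mul, mul_sub, mul_add, add_mul, smul_mul_assoc, mul_smul_comm, one_mul,
      mul_one, smul_smul]
    module

lemma aux_unit (P : A) (ξ : ℂ) (h : ‖P * P - P‖ < ‖ξ * (ξ - 1)‖) :
    IsUnit ((ξ * (ξ - 1)) • (1 : A) - (P * P - P)) ∧ IsUnit (ξ • (1 : A) - P) := by
  set μ : ℂ := ξ * (ξ - 1) with hμ
  set N : A := P * P - P with hN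
  have hμ0 : μ ≠ 0 := by
    intro h0
    rw [h0, norm_zero] at h
    exact absurd (norm_nonneg N) (not_le.2 h)
  have ht : ‖μ⁻¹ • N‖ < 1 := by
    rw [norm_smul, norm_inv]
    rw [inv_mul_lt_one₀ (lt_of_le_of_lt (norm_nonneg N) h)]
    exact h
  have hrw : μ • (1 : A) - N = μ • ((1 : A) - μ⁻¹ • N) := by
    rw [smul_sub, smul_smul, mul_inv_cancel₀ hμ0, one_smul]
  have h1 : IsUnit ((1 : A) - μ⁻¹ • N) := isUnit_one_sub_of_norm_lt_one ht
  have hsmul : IsUnit (μ • (1 : A)) := by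
    refine ⟨⟨μ • 1, μ⁻¹ • 1, ?_, ?_⟩, rfl⟩ <;>
      simp [smul_smul, mul_inv_cancel₀ hμ0, inv_mul_cancel₀ hμ0]
  have hD : IsUnit (μ • (1 : A) - N) := by
    rw [hrw]
    have : μ • ((1 : A) - μ⁻¹ • N) = (μ • (1 : A)) * ((1 : A) - μ⁻¹ • N) := by
      rw [smul_mul_assoc, one_mul]
    rw [this]
    exact hsmul.mul h1
  refine ⟨hD, ?_⟩
  have hcomm : Commute (ξ • (1 : A) - P) ((ξ - 1) • (1 : A) + P) := by
    unfold Commute SemiconjBy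
    rw [(factor P ξ).1, (factor P ξ).2]
  exact (hcomm.isUnit_mul_iff.mp (by rw [(factor P ξ).1]; exact hD)).1

/-- the terms of the expansion of `ξ • (ξ • 1 - P)⁻¹`, with the constant `1` as term `0`. -/
def gterm (P : A) : ℕ → ℂ → A
  | 0, _ => 1
  | (k + 1), ξ => ((ξ * (ξ - 1))⁻¹) ^ (k + 1) • (P * P - P) ^ (k + 1) +
      (ξ * ((ξ * (ξ - 1))⁻¹) ^ (k + 1)) • (P * (P * P - P) ^ k)

lemma aux_hasSum (P : A) (ξ : ℂ) (h : ‖P * P - P‖ < ‖ξ * (ξ - 1)‖) :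
    HasSum (fun k : ℕ => gterm P k ξ) (ξ • Ring.inverse (ξ • (1 : A) - P)) := by
  set μ : ℂ := ξ * (ξ - 1) with hμ
  set N : A := P * P - P with hN
  have hμ0 : μ ≠ 0 := by
    intro h0; rw [h0, norm_zero] at h
    exact absurd (norm_nonneg N) (not_le.2 h)
  have ht : ‖μ⁻¹ • N‖ < 1 := by
    rw [norm_smul, norm_inv, inv_mul_lt_one₀ (lt_of_le_of_lt (norm_nonneg N) h)]
    exact h
  obtain ⟨hD, hA⟩ := aux_unit P ξ h
  have hrw : μ • (1 : A) - N = μ • ((1 : A) - μ⁻¹ • N) := by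
    rw [smul_sub, smul_smul, mul_inv_cancel₀ hμ0, one_smul]
  have hinvD : Ring.inverse (μ • (1 : A) - N) = μ⁻¹ • Ring.inverse (1 - μ⁻¹ • N) := by
    apply ring_inverse_eq hD
    rw [hrw, smul_mul_assoc, mul_smul_comm, smul_smul, mul_inv_cancel₀ hμ0, one_smul,
      Ring.mul_inverse_cancel _ (isUnit_one_sub_of_norm_lt_one ht)]
  have hS1 : HasSum (fun k : ℕ => (μ⁻¹) ^ (k + 1) • N ^ k) (Ring.inverse (μ • (1 : A) - N)) := by
    rw [hinvD]
    have := (hasSum_geom_series_inverse (μ⁻¹ • N) ht).const_smul (μ⁻¹)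
    convert this using 2 with k
    rw [smul_pow, smul_smul, pow_succ']
  have hinvA : Ring.inverse (ξ • (1 : A) - P) =
      ((ξ - 1) • (1 : A) + P) * Ring.inverse (μ • (1 : A) - N) := by
    apply ring_inverse_eq hA
    rw [← mul_assoc, (factor P ξ).1, Ring.mul_inverse_cancel _ hD]
  have hS2 : HasSum (fun k : ℕ => (N + ξ • P) * ((μ⁻¹) ^ (k + 1) • N ^ k))
      ((N + ξ • P) * Ring.inverse (μ • (1 : A) - N)) := hS1.mul_left _
  have hval : ξ • Ring.inverse (ξ • (1 : A) - P) =
      1 + (N + ξ • P) * Ring.inverse (μ • (1 : A) - N) := by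
    rw [hinvA, ← smul_mul_assoc]
    have : ξ • ((ξ - 1) • (1 : A) + P) = (μ • (1 : A) - N) + (N + ξ • P) := by
      rw [smul_add, smul_smul]; ring_nf; module
    rw [this, add_mul, Ring.mul_inverse_cancel _ hD]
  have hterm : ∀ k : ℕ, (N + ξ • P) * ((μ⁻¹) ^ (k + 1) • N ^ k) = gterm P (k + 1) ξ := by
    intro k
    show _ = (μ⁻¹) ^ (k + 1) • N ^ (k + 1) + (ξ * (μ⁻¹) ^ (k + 1)) • (P * N ^ k)
    rw [add_mul, mul_smul_comm, mul_smul_comm, ← pow_succ', smul_mul_assoc, smul_smul,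
      mul_comm ξ]
  simp_rw [hterm] at hS2
  rw [hval]
  refine (hasSum_nat_add_iff' 1).mp ?_
  convert hS2 using 1
  · rfl
  simp [Finset.sum_range_one, gterm]

/-! ### Scalar circle integrals -/

/-- scalar integrals -/
def J (r : ℝ) (c : ℂ) (a b : ℕ) : ℂ :=
  ∮ ξ in C(c, r), ξ ^ (-(a : ℤ)) * (ξ - 1) ^ (-(b : ℤ))

def K (r : ℝ) (a b : ℕ) : ℂ := J r 0 a b + J r 1 a b

variable {r : ℝ} (hr : 0 < r) (hr2 : r < 1 / 2)

include hr hr2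

lemma J_b_zero (c : ℂ) {a : ℕ} (ha : a ≠ 1) : J r c a 0 = 0 := by
  have : J r c a 0 = ∮ ξ in C(c, r), (ξ - 0) ^ (-(a : ℤ)) := by
    unfold J
    congr 1 with ξ
    simp
  rw [this]
  apply circleIntegral.integral_sub_zpow_of_ne
  intro hcontra
  omega

lemma J_a_zero (c : ℂ) {b : ℕ} (hb : b ≠ 1) : J r c 0 b = 0 := by
  have : J r c 0 b = ∮ ξ in C(c, r), (ξ - 1) ^ (-(b : ℤ)) := by
    unfold J; congr 1 with ξ; simp
  rw [this]
  apply circleIntegral.integral_sub_zpow_of_ne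
  intro hcontra
  omega

lemma J_one_zero_zero : J r 0 1 0 = 2 * Real.pi * I := by
  have : J r 0 1 0 = ∮ ξ in C(0, r), (ξ - 0)⁻¹ := by
    unfold J; congr 1 with ξ; simp [zpow_neg]
  rw [this]
  exact circleIntegral.integral_sub_inv_of_mem_ball (by simpa using hr)

lemma J_zero_zero_one : J r 1 0 1 = 2 * Real.pi * I := by
  have : J r 1 0 1 = ∮ ξ in C(1, r), (ξ - 1)⁻¹ := by
    unfold J; congr 1 with ξ; simp [zpow_neg]
  rw [this]
  exact circleIntegral.integral_sub_inv_of_mem_ball (by simpa using hr)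

lemma J_one_one_zero : J r 1 1 0 = 0 := by
  have : J r 1 1 0 = ∮ ξ in C(1, r), ξ⁻¹ := by
    unfold J; congr 1 with ξ; simp [zpow_neg]
  rw [this]
  have hne : ∀ ξ : ℂ, ξ ∈ closedBall (1 : ℂ) r → ξ ≠ 0 := by
    intro ξ hξ h0
    rw [mem_closedBall, h0] at hξ
    simp only [dist_zero_left, norm_one] at hξ
    linarith
  apply circleIntegral_eq_zero_of_differentiable_on_off_countable hr.le Set.countable_empty
  · exact ContinuousOn.inv₀ continuousOn_id hne
  · intro ξ hξ
    exact differentiableAt_inv (hne ξ (ball_subset_closedBall hξ.1))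

lemma J_zero_one_zero : J r 0 0 1 = 0 := by
  have : J r 0 0 1 = ∮ ξ in C(0, r), (ξ - 1)⁻¹ := by
    unfold J; congr 1 with ξ; simp [zpow_neg]
  rw [this]
  have hne : ∀ ξ : ℂ, ξ ∈ closedBall (0 : ℂ) r → ξ - 1 ≠ 0 := by
    intro ξ hξ h0
    rw [sub_eq_zero] at h0
    rw [mem_closedBall, h0] at hξ
    simp only [dist_zero_right, norm_one] at hξ
    linarith
  apply circleIntegral_eq_zero_of_differentiable_on_off_countable hr.le Set.countable_empty
  · exact ContinuousOn.inv₀ (continuousOn_id.sub continuousOn_const) hne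
  · intro ξ hξ
    exact DifferentiableAt.inv ((differentiableAt_id).sub_const 1)
      (hne ξ (ball_subset_closedBall hξ.1))

omit hr2 in
lemma J_integrable {c : ℂ} (hs : ∀ ξ ∈ sphere c r, ξ ≠ 0 ∧ ξ - 1 ≠ 0) (a b : ℕ) :
    CircleIntegrable (fun ξ : ℂ => ξ ^ (-(a : ℤ)) * (ξ - 1) ^ (-(b : ℤ))) c r := by
  apply ContinuousOn.circleIntegrable hr.le
  apply ContinuousOn.mul
  · exact continuousOn_id.zpow₀ _ (fun ξ hξ => Or.inl (hs ξ hξ).1)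
  · exact (continuousOn_id.sub continuousOn_const).zpow₀ _ (fun ξ hξ => Or.inl (hs ξ hξ).2)

omit hr2 in
lemma J_rec {c : ℂ} (hs : ∀ ξ ∈ sphere c r, ξ ≠ 0 ∧ ξ - 1 ≠ 0) (a b : ℕ) :
    J r c (a + 1) (b + 1) = J r c a (b + 1) - J r c (a + 1) b := by
  have key : ∀ ξ : ℂ, ξ ≠ 0 → ξ - 1 ≠ 0 →
      ξ ^ (-(a : ℤ)) * (ξ - 1) ^ (-((b : ℤ) + 1)) - ξ ^ (-((a : ℤ) + 1)) * (ξ - 1) ^ (-(b : ℤ))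
      = ξ ^ (-((a : ℤ) + 1)) * (ξ - 1) ^ (-((b : ℤ) + 1)) := by
    intro ξ h0 h1
    rw [show (-(a : ℤ)) = -((a : ℤ) + 1) + 1 by ring, zpow_add₀ h0, zpow_one,
      show (-(b : ℤ)) = -((b : ℤ) + 1) + 1 by ring, zpow_add₀ h1, zpow_one]
    ring
  have hJ : J r c (a + 1) (b + 1) =
      ∮ ξ in C(c, r), (ξ ^ (-(a : ℤ)) * (ξ - 1) ^ (-((b : ℕ) + 1 : ℕ) : ℤ)
        - ξ ^ (-((a : ℕ) + 1 : ℕ) : ℤ) * (ξ - 1) ^ (-(b : ℤ))) := by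
    unfold J
    apply circleIntegral.integral_congr hr.le
    intro ξ hξ
    have := key ξ (hs ξ hξ).1 (hs ξ hξ).2
    push_cast
    push_cast at this
    rw [this]
  rw [hJ]
  unfold J
  rw [circleIntegral.integral_sub (J_integrable hr hs a (b + 1)) (J_integrable hr hs (a + 1) b)]

lemma sphere_cond_zero : ∀ ξ ∈ sphere (0 : ℂ) r, ξ ≠ 0 ∧ ξ - 1 ≠ 0 := by
  intro ξ hξ
  rw [mem_sphere_iff_norm, sub_zero] at hξ
  constructor
  · intro h0; rw [h0, norm_zero] at hξ; linarith
  · intro h1; rw [sub_eq_zero] at h1; rw [h1, norm_one] at hξ; linarith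

lemma sphere_cond_one : ∀ ξ ∈ sphere (1 : ℂ) r, ξ ≠ 0 ∧ ξ - 1 ≠ 0 := by
  intro ξ hξ
  rw [mem_sphere_iff_norm] at hξ
  constructor
  · intro h0; rw [h0] at hξ; simp only [zero_sub, norm_neg, norm_one] at hξ; linarith
  · intro h1; rw [h1, norm_zero] at hξ; linarith

lemma K_one_zero : K r 1 0 = 2 * Real.pi * I := by
  unfold K
  rw [J_one_zero_zero hr hr2, J_one_one_zero hr hr2, add_zero]

lemma K_zero_one : K r 0 1 = 2 * Real.pi * I := by
  unfold K
  rw [J_zero_zero_one hr hr2, J_zero_one_zero hr hr2, zero_add]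

lemma K_rec (a b : ℕ) : K r (a + 1) (b + 1) = K r a (b + 1) - K r (a + 1) b := by
  unfold K
  rw [J_rec hr (sphere_cond_zero hr hr2) a b, J_rec hr (sphere_cond_one hr hr2) a b]
  ring

lemma K_eq_zero : ∀ n a b : ℕ, a + b = n → 2 ≤ n → K r a b = 0 := by
  intro n
  induction n using Nat.strong_induction_on with
  | _ n ih =>
    intro a b hab hn
    match a, b with
    | 0, b =>
      have hb : b ≠ 1 := by omega
      unfold K
      rw [J_a_zero hr hr2 _ hb, J_a_zero hr hr2 _ hb, add_zero]
    | a + 1, 0 =>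
      have ha : a + 1 ≠ 1 := by omega
      unfold K
      rw [J_b_zero hr hr2 _ ha, J_b_zero hr hr2 _ ha, add_zero]
    | a + 1, b + 1 =>
      rw [K_rec hr hr2]
      rcases Nat.lt_or_ge n 3 with h3 | h3
      · have ha : a = 0 := by omega
        have hb : b = 0 := by omega
        subst ha; subst hb
        rw [K_zero_one hr hr2, K_one_zero hr hr2, sub_self]
      · rw [ih (n - 1) (by omega) a (b + 1) (by omega) (by omega),
          ih (n - 1) (by omega) (a + 1) b (by omega) (by omega), sub_self]

omit hr hr2

/-! ### Integration of the series -/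

/-- bound sequence -/
def bnd (P : A) (m : ℝ) : ℕ → ℝ
  | 0 => ‖(1 : A)‖
  | (k + 1) => (1 + 2 * ‖P‖ / m) * (‖P * P - P‖ / m) ^ k

lemma gterm_contOn (P : A) (k : ℕ) {c : ℂ} {r : ℝ}
    (hs : ∀ ξ ∈ sphere c r, ξ * (ξ - 1) ≠ 0) :
    ContinuousOn (gterm P k) (sphere c r) := by
  match k with
  | 0 => exact continuousOn_const
  | k + 1 =>
    have hμ : ContinuousOn (fun ξ : ℂ => ((ξ * (ξ - 1))⁻¹) ^ (k + 1)) (sphere c r) :=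
      ((continuousOn_id.mul (continuousOn_id.sub continuousOn_const)).inv₀ hs).pow _
    exact (hμ.smul continuousOn_const).add ((continuousOn_id.mul hμ).smul continuousOn_const)

lemma gterm_norm_le (P : A) (k : ℕ) {m : ℝ} (hm0 : 0 < m) (hmN : ‖P * P - P‖ < m)
    {ξ : ℂ} (hμ : m ≤ ‖ξ * (ξ - 1)‖) (hξ : ‖ξ‖ ≤ 2) :
    ‖gterm P k ξ‖ ≤ bnd P m k := by
  set N : A := P * P - P with hN
  set μ : ℂ := ξ * (ξ - 1) with hμdef
  set q : ℝ := ‖N‖ / m with hq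
  have hq0 : 0 ≤ q := div_nonneg (norm_nonneg _) hm0.le
  have hq1 : q < 1 := (div_lt_one hm0).2 hmN
  match k with
  | 0 => exact le_refl _
  | k + 1 =>
    have hinv : ‖μ‖⁻¹ ≤ m⁻¹ := by
      apply inv_anti₀ hm0 hμ
    have hPNk : ‖P * N ^ k‖ ≤ ‖P‖ * ‖N‖ ^ k := by
      match k with
      | 0 => simp
      | k + 1 =>
        calc ‖P * N ^ (k + 1)‖ ≤ ‖P‖ * ‖N ^ (k + 1)‖ := norm_mul_le _ _
        _ ≤ ‖P‖ * ‖N‖ ^ (k + 1) := by gcongr; exact norm_pow_le' _ k.succ_pos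
    have h1 : ‖(μ⁻¹) ^ (k + 1) • N ^ (k + 1)‖ ≤ q ^ (k + 1) := by
      rw [norm_smul, norm_pow, norm_inv]
      calc ‖μ‖⁻¹ ^ (k + 1) * ‖N ^ (k + 1)‖ ≤ m⁻¹ ^ (k + 1) * ‖N‖ ^ (k + 1) := by
            gcongr
            exact norm_pow_le' _ k.succ_pos
      _ = q ^ (k + 1) := by rw [hq, div_pow, inv_pow, div_eq_mul_inv, mul_comm]
    have h2 : ‖(ξ * (μ⁻¹) ^ (k + 1)) • (P * N ^ k)‖ ≤ 2 * ‖P‖ / m * q ^ k := by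
      rw [norm_smul, norm_mul, norm_pow, norm_inv]
      calc ‖ξ‖ * ‖μ‖⁻¹ ^ (k + 1) * ‖P * N ^ k‖
          ≤ 2 * m⁻¹ ^ (k + 1) * (‖P‖ * ‖N‖ ^ k) := by gcongr
      _ = 2 * ‖P‖ / m * q ^ k := by
            rw [hq, div_pow, pow_succ, inv_pow]
            field_simp
    calc ‖gterm P (k + 1) ξ‖ ≤
        ‖(μ⁻¹) ^ (k + 1) • N ^ (k + 1)‖ + ‖(ξ * (μ⁻¹) ^ (k + 1)) • (P * N ^ k)‖ :=
          norm_add_le _ _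
    _ ≤ q ^ (k + 1) + 2 * ‖P‖ / m * q ^ k := add_le_add h1 h2
    _ ≤ 1 * q ^ k + 2 * ‖P‖ / m * q ^ k := by
          rw [pow_succ']
          exact add_le_add (mul_le_mul_of_nonneg_right hq1.le (pow_nonneg hq0 k)) le_rfl
    _ = bnd P m (k + 1) := by rw [bnd]; ring

lemma bnd_summable (P : A) {m : ℝ} (hm0 : 0 < m) (hmN : ‖P * P - P‖ < m) :
    Summable (bnd P m) := by
  apply (summable_nat_add_iff 1).mp
  have : Summable (fun k : ℕ => (1 + 2 * ‖P‖ / m) * (‖P * P - P‖ / m) ^ k) :=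
    (summable_geometric_of_lt_one (div_nonneg (norm_nonneg _) hm0.le)
      ((div_lt_one hm0).2 hmN)).mul_left _
  exact this.congr (fun k => rfl)

lemma circle_hasSum (P : A) (c : ℂ) {r m : ℝ} (hr : 0 < r)
    (hm0 : 0 < m) (hmN : ‖P * P - P‖ < m)
    (hsp : ∀ ξ ∈ sphere c r, m ≤ ‖ξ * (ξ - 1)‖ ∧ ‖ξ‖ ≤ 2) :
    HasSum (fun k : ℕ => ∮ ξ in C(c, r), gterm P k ξ)
      (∮ ξ in C(c, r), ξ • Ring.inverse (ξ • (1 : A) - P)) := by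
  have hsge : ∀ ξ ∈ sphere c r, ‖P * P - P‖ < ‖ξ * (ξ - 1)‖ := fun ξ hξ =>
    lt_of_lt_of_le hmN (hsp ξ hξ).1
  have hne : ∀ ξ ∈ sphere c r, ξ * (ξ - 1) ≠ 0 := by
    intro ξ hξ h0
    have := (hsp ξ hξ).1
    rw [h0, norm_zero] at this
    linarith
  simp only [circleIntegral]
  apply intervalIntegral.hasSum_integral_of_dominated_convergence
    (fun k (_ : ℝ) => r * bnd P m k)
  · intro k
    apply Continuous.aestronglyMeasurable
    apply Continuous.smul
    · have hderiv : (deriv (circleMap c r)) = fun θ => circleMap 0 r θ * I :=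
        funext (fun θ => deriv_circleMap c r θ)
      rw [hderiv]
      exact (continuous_circleMap 0 r).mul continuous_const
    · exact (gterm_contOn P k hne).comp_continuous (continuous_circleMap c r)
        (fun θ => circleMap_mem_sphere c hr.le θ)
  · intro k
    filter_upwards with θ _
    rw [norm_smul, deriv_circleMap]
    have h1 : ‖circleMap 0 r θ * I‖ = r := by
      simp [abs_of_pos hr]
    rw [h1]
    have hmem := circleMap_mem_sphere c hr.le θ
    exact mul_le_mul_of_nonneg_left
      (gterm_norm_le P k hm0 hmN (hsp _ hmem).1 (hsp _ hmem).2) hr.le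
  · filter_upwards with θ _
    exact (bnd_summable P hm0 hmN).mul_left r
  · exact intervalIntegrable_const
  · filter_upwards with θ _
    exact (aux_hasSum P _ (hsge _ (circleMap_mem_sphere c hr.le θ))).const_smul _

/-! ### Evaluation of the termwise integrals -/

lemma circleIntegral_add {E : Type*} [NormedAddCommGroup E] [NormedSpace ℂ E] {f g : ℂ → E}
    {c : ℂ} {r : ℝ} (hf : CircleIntegrable f c r) (hg : CircleIntegrable g c r) :
    (∮ z in C(c, r), (f z + g z)) = (∮ z in C(c, r), f z) + ∮ z in C(c, r), g z := by
  simp only [circleIntegral, smul_add, intervalIntegral.integral_add hf.out hg.out]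

lemma integral_one (c : ℂ) (r : ℝ) : (∮ _ in C(c, r), (1 : ℂ)) = 0 := by
  have := circleIntegral.integral_sub_zpow_of_ne (n := 0) (by decide) c c r
  simpa using this

lemma integral_gterm_zero (P : A) (c : ℂ) (r : ℝ) :
    (∮ ξ in C(c, r), gterm P 0 ξ) = 0 := by
  have h1 : (∮ ξ in C(c, r), gterm P 0 ξ) = (∮ _ in C(c, r), (1 : ℂ)) • (1 : A) := by
    rw [← circleIntegral.integral_smul_const]
    show (∮ _ in C(c, r), (1 : A)) = _
    congr 1 with ξ
    rw [one_smul]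
  rw [h1, integral_one, zero_smul]

lemma pow_inv_eq_zpow (k : ℕ) (ξ : ℂ) :
    ((ξ * (ξ - 1))⁻¹) ^ (k + 1) = ξ ^ (-((k : ℤ) + 1)) * (ξ - 1) ^ (-((k : ℤ) + 1)) := by
  rw [mul_inv, mul_pow, ← zpow_natCast (ξ⁻¹), ← zpow_natCast ((ξ - 1)⁻¹),
    inv_zpow, inv_zpow, ← zpow_neg, ← zpow_neg]
  push_cast
  ring_nf

lemma integral_gterm_succ (P : A) {c : ℂ} {r : ℝ} (hr : 0 < r)
    (hs : ∀ ξ ∈ sphere c r, ξ ≠ 0 ∧ ξ - 1 ≠ 0) (k : ℕ) :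
    (∮ ξ in C(c, r), gterm P (k + 1) ξ) =
      J r c (k + 1) (k + 1) • (P * P - P) ^ (k + 1) +
      J r c k (k + 1) • (P * (P * P - P) ^ k) := by
  set N : A := P * P - P with hN
  have hne : ∀ ξ ∈ sphere c r, ξ * (ξ - 1) ≠ 0 := fun ξ hξ =>
    mul_ne_zero (hs ξ hξ).1 (hs ξ hξ).2
  have hc1 : ContinuousOn (fun ξ : ℂ => ((ξ * (ξ - 1))⁻¹) ^ (k + 1)) (sphere c r) :=
    ((continuousOn_id.mul (continuousOn_id.sub continuousOn_const)).inv₀ hne).pow _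
  have hi1 : CircleIntegrable (fun ξ : ℂ => ((ξ * (ξ - 1))⁻¹) ^ (k + 1) • N ^ (k + 1)) c r :=
    (hc1.smul continuousOn_const).circleIntegrable hr.le
  have hi2 : CircleIntegrable
      (fun ξ : ℂ => (ξ * ((ξ * (ξ - 1))⁻¹) ^ (k + 1)) • (P * N ^ k)) c r :=
    ((continuousOn_id.mul hc1).smul continuousOn_const).circleIntegrable hr.le
  have hsplit : (∮ ξ in C(c, r), gterm P (k + 1) ξ) =
      (∮ ξ in C(c, r), ((ξ * (ξ - 1))⁻¹) ^ (k + 1) • N ^ (k + 1)) +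
      (∮ ξ in C(c, r), (ξ * ((ξ * (ξ - 1))⁻¹) ^ (k + 1)) • (P * N ^ k)) := by
    exact circleIntegral_add hi1 hi2
  rw [hsplit]
  congr 1
  · calc (∮ ξ in C(c, r), ((ξ * (ξ - 1))⁻¹) ^ (k + 1) • N ^ (k + 1))
        = ∮ ξ in C(c, r), (ξ ^ (-((k : ℤ) + 1)) * (ξ - 1) ^ (-((k : ℤ) + 1))) • N ^ (k + 1) := by
          apply circleIntegral.integral_congr hr.le
          intro ξ hξ
          simp only [pow_inv_eq_zpow]
    _ = (∮ ξ in C(c, r), ξ ^ (-((k : ℤ) + 1)) * (ξ - 1) ^ (-((k : ℤ) + 1))) • N ^ (k + 1) :=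
          circleIntegral.integral_smul_const _ _ _ _
    _ = J r c (k + 1) (k + 1) • N ^ (k + 1) := by
          unfold J
          push_cast
          rfl
  · calc (∮ ξ in C(c, r), (ξ * ((ξ * (ξ - 1))⁻¹) ^ (k + 1)) • (P * N ^ k))
        = ∮ ξ in C(c, r), (ξ ^ (-((k : ℤ))) * (ξ - 1) ^ (-((k : ℤ) + 1))) • (P * N ^ k) := by
          apply circleIntegral.integral_congr hr.le
          intro ξ hξ
          simp only [pow_inv_eq_zpow]
          have h0 := (hs ξ hξ).1
          rw [show (-((k : ℤ))) = -((k : ℤ) + 1) + 1 by ring, zpow_add₀ h0, zpow_one]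
          ring_nf
    _ = (∮ ξ in C(c, r), ξ ^ (-((k : ℤ))) * (ξ - 1) ^ (-((k : ℤ) + 1))) • (P * N ^ k) :=
          circleIntegral.integral_smul_const _ _ _ _
    _ = J r c k (k + 1) • (P * N ^ k) := by
          unfold J
          push_cast
          rfl

end Stmt6Aux

end

open Stmt6Aux

/-- Cauchy-integral decomposition: if `‖P² − P‖ < ε` with `0 < ε < 1/4`, then `ξ·I − P`
is invertible for every `ξ` with `|ξ| = 2ε` and every `ξ` with `|ξ − 1| = 2ε`, and
`P = (2πi)⁻¹ ∮_{|ξ|=2ε} ξ(ξ·I − P)⁻¹ dξ + (2πi)⁻¹ ∮_{|ξ−1|=2ε} ξ(ξ·I − P)⁻¹ dξ`. -/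
theorem stmt6 {H : Type*} [NormedAddCommGroup H] [InnerProductSpace ℂ H] [CompleteSpace H]
    (P : H →L[ℂ] H) (ε : ℝ) (hε0 : 0 < ε) (hε : ε < 1 / 4)
    (hP : ‖P ^ 2 - P‖ < ε) :
    (∀ ξ : ℂ, ‖ξ‖ = 2 * ε → IsUnit (ξ • (1 : H →L[ℂ] H) - P)) ∧
    (∀ ξ : ℂ, ‖ξ - 1‖ = 2 * ε → IsUnit (ξ • (1 : H →L[ℂ] H) - P)) ∧
    P = (2 * Real.pi * Complex.I : ℂ)⁻¹ •
          (∮ ξ in C(0, 2 * ε), ξ • Ring.inverse (ξ • (1 : H →L[ℂ] H) - P)) +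
        (2 * Real.pi * Complex.I : ℂ)⁻¹ •
          (∮ ξ in C(1, 2 * ε), ξ • Ring.inverse (ξ • (1 : H →L[ℂ] H) - P)) := by
  set N : H →L[ℂ] H := P * P - P with hNdef
  have hP' : ‖N‖ < ε := by
    rw [hNdef, ← pow_two]
    exact hP
  set r : ℝ := 2 * ε with hrdef
  set m : ℝ := 2 * ε * (1 - 2 * ε) with hmdef
  have hr : 0 < r := by positivity
  have hr2 : r < 1 / 2 := by rw [hrdef]; linarith
  have hm0 : 0 < m := by
    rw [hmdef]
    have : (0:ℝ) < 1 - 2 * ε := by linarith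
    positivity
  have hεm : ε < m := by rw [hmdef]; nlinarith
  have hmN : ‖N‖ < m := lt_trans hP' hεm
  -- norm estimates on the two circles
  have hsp0 : ∀ ξ ∈ Metric.sphere (0 : ℂ) r, m ≤ ‖ξ * (ξ - 1)‖ ∧ ‖ξ‖ ≤ 2 := by
    intro ξ hξ
    rw [mem_sphere_iff_norm, sub_zero] at hξ
    have h1 : (1 : ℝ) - r ≤ ‖ξ - 1‖ := by
      have := norm_sub_norm_le (1 : ℂ) ξ
      rw [norm_one, norm_sub_rev] at this
      linarith [hξ]
    constructor
    · rw [norm_mul, hξ]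
      calc m = r * (1 - r) := by rw [hmdef, hrdef]
      _ ≤ r * ‖ξ - 1‖ := by
          apply mul_le_mul_of_nonneg_left h1 hr.le
    · rw [hξ]; linarith
  have hsp1 : ∀ ξ ∈ Metric.sphere (1 : ℂ) r, m ≤ ‖ξ * (ξ - 1)‖ ∧ ‖ξ‖ ≤ 2 := by
    intro ξ hξ
    rw [mem_sphere_iff_norm] at hξ
    have h1 : (1 : ℝ) - r ≤ ‖ξ‖ := by
      have := norm_sub_norm_le (1 : ℂ) (1 - ξ)
      simp only [norm_one, sub_sub_cancel] at this
      rw [norm_sub_rev] at this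
      linarith [hξ]
    have h2 : ‖ξ‖ ≤ 1 + r := by
      calc ‖ξ‖ = ‖1 + (ξ - 1)‖ := by ring_nf
      _ ≤ ‖(1 : ℂ)‖ + ‖ξ - 1‖ := norm_add_le _ _
      _ = 1 + r := by rw [norm_one, hξ]
    constructor
    · rw [norm_mul, hξ]
      calc m = (1 - r) * r := by rw [hmdef, hrdef]; ring
      _ ≤ ‖ξ‖ * r := mul_le_mul_of_nonneg_right h1 hr.le
    · linarith
  have hunit0 : ∀ ξ : ℂ, ‖ξ‖ = 2 * ε → IsUnit (ξ • (1 : H →L[ℂ] H) - P) := by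
    intro ξ hξ
    have hmem : ξ ∈ Metric.sphere (0 : ℂ) r := by
      rw [mem_sphere_iff_norm, sub_zero]; exact hξ
    exact (aux_unit P ξ (lt_of_lt_of_le hmN (hsp0 ξ hmem).1)).2
  have hunit1 : ∀ ξ : ℂ, ‖ξ - 1‖ = 2 * ε → IsUnit (ξ • (1 : H →L[ℂ] H) - P) := by
    intro ξ hξ
    have hmem : ξ ∈ Metric.sphere (1 : ℂ) r := by
      rw [mem_sphere_iff_norm]; exact hξ
    exact (aux_unit P ξ (lt_of_lt_of_le hmN (hsp1 ξ hmem).1)).2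
  refine ⟨hunit0, hunit1, ?_⟩
  -- the two HasSum results
  have h0 := circle_hasSum P 0 hr hm0 hmN hsp0
  have h1 := circle_hasSum P 1 hr hm0 hmN hsp1
  have hsum := h0.add h1
  -- evaluate the terms
  have hterm : ∀ k : ℕ,
      ((∮ ξ in C(0, r), gterm P k ξ) + ∮ ξ in C(1, r), gterm P k ξ) =
      (if k = 1 then (2 * Real.pi * Complex.I : ℂ) • P else 0) := by
    intro k
    have hre : ∀ (x x' y y' : ℂ) (X Y : H →L[ℂ] H),
        (x • X + y • Y) + (x' • X + y' • Y) = (x + x') • X + (y + y') • Y := by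
      intros x x' y y' X Y
      rw [add_smul, add_smul]
      abel
    match k with
    | 0 =>
      rw [integral_gterm_zero, integral_gterm_zero, add_zero]
      simp
    | (k + 1) =>
      rw [integral_gterm_succ P hr (sphere_cond_zero hr hr2) k,
        integral_gterm_succ P hr (sphere_cond_one hr hr2) k, hre,
        show J r 0 (k+1) (k+1) + J r 1 (k+1) (k+1) = K r (k+1) (k+1) from rfl,
        show J r 0 k (k+1) + J r 1 k (k+1) = K r k (k+1) from rfl,
        K_eq_zero hr hr2 (2*k+2) (k+1) (k+1) (by ring) (by omega), zero_smul, zero_add]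
      match k with
      | 0 =>
        rw [K_zero_one hr hr2, if_pos rfl]
        simp
      | (k + 1) =>
        rw [K_eq_zero hr hr2 (2*k+3) (k+1) (k+2) (by ring) (by omega), zero_smul,
          if_neg (by omega)]
  simp only [hterm] at hsum
  have hval : ((∮ ξ in C(0, r), ξ • Ring.inverse (ξ • (1 : H →L[ℂ] H) - P)) +
      ∮ ξ in C(1, r), ξ • Ring.inverse (ξ • (1 : H →L[ℂ] H) - P)) =
      (2 * Real.pi * Complex.I : ℂ) • P :=
    hsum.unique (hasSum_ite_eq 1 _)
  rw [← smul_add, hval, smul_smul, inv_mul_cancel₀ Complex.two_pi_I_ne_zero, one_smul]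
end

section
/- Let H be a complex Hilbert space, P a bounded linear operator on H, and ε a real number with 0 < ε < 1/4 such that ‖P² − P‖ < ε. Then ‖(1/(2πi)) ∮_{|ξ−1|=2ε} (1 − ξ)(ξ·I − P)⁻¹ dξ‖ ≤ (4ε/(1 − 4ε))·(‖P‖ + 2ε), where the circle integral is taken counterclockwise over the circle of center 1 and radius 2ε (on which ξ·I − P is invertible). -/
open Complex

/-- Contour estimate: if `‖P² − P‖ < ε` with `0 < ε < 1/4`, then
`‖(2πi)⁻¹ ∮_{|ξ−1|=2ε} (1 − ξ)(ξ·I − P)⁻¹ dξ‖ ≤ (4ε/(1 − 4ε))·(‖P‖ + 2ε)`. -/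
theorem stmt7 {H : Type*} [NormedAddCommGroup H] [InnerProductSpace ℂ H] [CompleteSpace H]
    (P : H →L[ℂ] H) (ε : ℝ) (hε0 : 0 < ε) (hε : ε < 1 / 4)
    (hP : ‖P ^ 2 - P‖ < ε) :
    ‖(2 * Real.pi * Complex.I : ℂ)⁻¹ •
        (∮ ξ in C(1, 2 * ε), (1 - ξ) • Ring.inverse (ξ • (1 : H →L[ℂ] H) - P))‖ ≤
      4 * ε / (1 - 4 * ε) * (‖P‖ + 2 * ε) := by
  set Q : H →L[ℂ] H := P ^ 2 - P with hQ
  have hQlt : ‖Q‖ < ε := by rw [hQ]; exact hP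
  have hQc : Commute Q P := ((Commute.refl P).pow_left 2).sub_left (Commute.refl P)
  have h4 : 0 < 1 - 4 * ε := by linarith
  set C : ℝ := 2 * (‖P‖ + 2 * ε) / (1 - 4 * ε) with hC
  have hPnn : (0:ℝ) ≤ ‖P‖ := norm_nonneg _
  have hCnn : 0 ≤ C := by positivity
  have hone : ‖(1 : H →L[ℂ] H)‖ ≤ 1 := ContinuousLinearMap.norm_id_le
  -- pointwise bound on the integrand
  have key : ∀ ξ ∈ Metric.sphere (1 : ℂ) (2 * ε),
      ‖(1 - ξ) • Ring.inverse (ξ • (1 : H →L[ℂ] H) - P)‖ ≤ C := by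
    intro ξ hξ
    rw [Metric.mem_sphere, Complex.dist_eq] at hξ
    have hξ1 : ‖ξ - 1‖ = 2 * ε := hξ
    have hξabs : 1 - 2 * ε ≤ ‖ξ‖ := by
      have h := norm_sub_norm_le (1 : ℂ) (1 - ξ)
      simp only [norm_one, sub_sub_cancel] at h
      have h2 : ‖1 - ξ‖ = 2 * ε := by
        rw [show (1 - ξ : ℂ) = -(ξ - 1) by ring, norm_neg, hξ1]
      linarith
    have hξne : ξ ≠ 0 := by
      intro h; rw [h] at hξabs; simp at hξabs; linarith
    have hξ1ne : ξ - 1 ≠ 0 := by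
      intro h
      rw [h] at hξ1; simp at hξ1; linarith
    set c : ℂ := ξ * (ξ - 1) with hc
    have hcne : c ≠ 0 := mul_ne_zero hξne hξ1ne
    have hcabs : 2 * ε * (1 - 2 * ε) ≤ ‖c‖ := by
      rw [hc, norm_mul, hξ1]
      have h2 : (0:ℝ) < 2 * ε := by linarith
      calc 2 * ε * (1 - 2 * ε) ≤ 2 * ε * ‖ξ‖ :=
            mul_le_mul_of_nonneg_left hξabs h2.le
        _ = ‖ξ‖ * (2 * ε) := by ring
    set t : H →L[ℂ] H := c⁻¹ • Q with ht
    have htn : ‖t‖ = ‖Q‖ / ‖c‖ := by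
      rw [ht, norm_smul, norm_inv, div_eq_inv_mul]
    have hcpos : (0:ℝ) < ‖c‖ := by
      have : (0:ℝ) < 2 * ε * (1 - 2 * ε) := by nlinarith
      linarith
    have htlt : ‖t‖ < 1 := by
      rw [htn, div_lt_one hcpos]
      calc ‖Q‖ < ε := hQlt
        _ ≤ 2 * ε * (1 - 2 * ε) := by nlinarith
        _ ≤ ‖c‖ := hcabs
    -- algebraic identity
    have key1 : (ξ • (1 : H →L[ℂ] H) - P) * (P + (ξ - 1) • 1) = c • ((1 : H →L[ℂ] H) - t) := by
      have hct : c • t = Q := by rw [ht, smul_smul, mul_inv_cancel₀ hcne, one_smul]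
      rw [smul_sub, hct]
      simp only [mul_add, add_mul, sub_mul, mul_sub, smul_mul_assoc, mul_smul_comm,
        smul_smul, one_mul, mul_one, hQ, hc, pow_two]
      module
    have key2 : (P + (ξ - 1) • 1) * (ξ • (1 : H →L[ℂ] H) - P) = c • ((1 : H →L[ℂ] H) - t) := by
      have hcomm : Commute (ξ • (1 : H →L[ℂ] H) - P) (P + (ξ - 1) • 1) := by
        apply Commute.sub_left
        · exact (((Commute.one_left P).smul_left ξ).add_right
            (((Commute.one_left (1 : H →L[ℂ] H)).smul_left ξ).smul_right (ξ-1)))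
        · exact (Commute.refl P).add_right ((Commute.one_right P).smul_right (ξ-1))
      rw [← hcomm.eq, key1]
    set u0 : (H →L[ℂ] H)ˣ := Units.oneSub t htlt with hu0
    have hcommt : Commute ((1 : H →L[ℂ] H) - t) (ξ • (1 : H →L[ℂ] H) - P) := by
      apply Commute.sub_left
      · exact ((Commute.one_left (1 : H →L[ℂ] H)).smul_right ξ).sub_right (Commute.one_left P)
      · exact (((Commute.one_right Q).smul_right ξ).sub_right hQc).smul_left c⁻¹
    have hcomm0 : Commute ((u0⁻¹ : (H →L[ℂ] H)ˣ) : H →L[ℂ] H) (ξ • (1 : H →L[ℂ] H) - P) :=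
      Commute.units_inv_left (u := u0) hcommt
    set b : H →L[ℂ] H := (c⁻¹ • (P + (ξ - 1) • 1)) * ((u0⁻¹ : (H →L[ℂ] H)ˣ) : H →L[ℂ] H)
      with hb
    have hb1 : (ξ • (1 : H →L[ℂ] H) - P) * b = 1 := by
      rw [hb, ← mul_assoc, mul_smul_comm, key1, smul_smul, inv_mul_cancel₀ hcne, one_smul]
      exact u0.mul_inv
    have hb2 : b * (ξ • (1 : H →L[ℂ] H) - P) = 1 := by
      rw [hb, mul_assoc, hcomm0.eq, ← mul_assoc, smul_mul_assoc, key2, smul_smul,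
        inv_mul_cancel₀ hcne, one_smul]
      exact u0.mul_inv
    set u : (H →L[ℂ] H)ˣ := ⟨ξ • (1 : H →L[ℂ] H) - P, b, hb1, hb2⟩ with hu
    have hinv : Ring.inverse (ξ • (1 : H →L[ℂ] H) - P) = b := Ring.inverse_unit u
    -- norm bound on b
    have hbound : ‖b‖ ≤ (‖P‖ + 2 * ε) / (ε * (1 - 4 * ε)) := by
      have h1 : ‖((u0⁻¹ : (H →L[ℂ] H)ˣ) : H →L[ℂ] H)‖ ≤ (1 - ‖t‖)⁻¹ := by
        have heq : ((u0⁻¹ : (H →L[ℂ] H)ˣ) : H →L[ℂ] H) = ∑' n : ℕ, t ^ n := rfl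
        rw [heq]
        have h2 := tsum_geometric_le_of_norm_lt_one t htlt
        linarith
      have h2 : ‖c⁻¹ • (P + (ξ - 1) • 1)‖ ≤ (‖P‖ + 2 * ε) / ‖c‖ := by
        rw [norm_smul, norm_inv, div_eq_inv_mul]
        apply mul_le_mul_of_nonneg_left _ (by positivity)
        have hsm : ‖(ξ - 1) • (1 : H →L[ℂ] H)‖ ≤ 2 * ε := by
          calc ‖(ξ - 1) • (1 : H →L[ℂ] H)‖
              = ‖ξ - 1‖ * ‖(1 : H →L[ℂ] H)‖ := by
                rw [norm_smul]
            _ ≤ 2 * ε * 1 := mul_le_mul (le_of_eq hξ1) hone (norm_nonneg _) (by positivity)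
            _ = 2 * ε := mul_one _
        calc ‖P + (ξ - 1) • (1 : H →L[ℂ] H)‖ ≤ ‖P‖ + ‖(ξ - 1) • (1 : H →L[ℂ] H)‖ :=
              norm_add_le _ _
          _ ≤ ‖P‖ + 2 * ε := by linarith
      have htub : ‖t‖ < 1 := htlt
      calc ‖b‖ ≤ ‖c⁻¹ • (P + (ξ - 1) • 1)‖ * ‖((u0⁻¹ : (H →L[ℂ] H)ˣ) : H →L[ℂ] H)‖ :=
            norm_mul_le _ _
        _ ≤ ((‖P‖ + 2 * ε) / ‖c‖) * (1 - ‖t‖)⁻¹ :=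
            mul_le_mul h2 h1 (norm_nonneg _) (by positivity)
        _ = (‖P‖ + 2 * ε) / (‖c‖ - ‖Q‖) := by
            rw [htn, one_sub_div hcpos.ne', inv_div, div_mul_div_comm,
              mul_comm (‖P‖ + 2 * ε) (‖c‖),
              mul_div_mul_left _ _ hcpos.ne']
        _ ≤ (‖P‖ + 2 * ε) / (ε * (1 - 4 * ε)) := by
            apply div_le_div_of_nonneg_left (by positivity) (by positivity)
            nlinarith [hQlt.le, hcabs]
    rw [hinv, norm_smul]
    have habs1 : ‖1 - ξ‖ = 2 * ε := by
      rw [show (1 - ξ : ℂ) = -(ξ - 1) from by ring, norm_neg, hξ1]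
    rw [habs1, hC]
    calc 2 * ε * ‖b‖ ≤ 2 * ε * ((‖P‖ + 2 * ε) / (ε * (1 - 4 * ε))) :=
          mul_le_mul_of_nonneg_left hbound (by positivity)
      _ = 2 * (‖P‖ + 2 * ε) / (1 - 4 * ε) := by field_simp
  have hint := circleIntegral.norm_integral_le_of_norm_le_const (c := (1:ℂ)) (R := 2 * ε)
    (f := fun ξ => (1 - ξ) • Ring.inverse (ξ • (1 : H →L[ℂ] H) - P)) (by positivity) key
  rw [norm_smul]
  have hnorm : ‖(2 * Real.pi * Complex.I : ℂ)⁻¹‖ = (2 * Real.pi)⁻¹ := by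
    rw [norm_inv]
    simp [abs_of_pos Real.pi_pos]
  rw [hnorm]
  have hpi : (0:ℝ) < 2 * Real.pi := by positivity
  calc (2 * Real.pi)⁻¹ *
        ‖∮ ξ in C(1, 2 * ε), (1 - ξ) • Ring.inverse (ξ • (1 : H →L[ℂ] H) - P)‖
      ≤ (2 * Real.pi)⁻¹ * (2 * Real.pi * (2 * ε) * C) :=
        mul_le_mul_of_nonneg_left hint (by positivity)
    _ = 2 * ε * C := by field_simp
    _ = 4 * ε / (1 - 4 * ε) * (‖P‖ + 2 * ε) := by rw [hC]; field_simp; ring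
end

section
/- Let H be a complex Hilbert space, P a bounded linear operator on H, and ε a real number with 0 < ε < 1/4 such that ‖P² − P‖ < ε. Let Θ(P) := (1/(2πi)) ∮_{|ξ−1|=2ε} (ξ·I − P)⁻¹ dξ be the Riesz projection over the circle of center 1 and radius 2ε (traversed counterclockwise; ξ·I − P is invertible on this circle). Then ‖Θ(P) − P‖ ≤ (4ε/(1 − 4ε))·(‖P‖ + ‖I − P‖ + 4ε). -/
open Complex

set_option maxHeartbeats 1000000
set_option synthInstance.maxHeartbeats 200000

lemma aux_resolvent {A : Type*} [NormedRing A] [NormedAlgebra ℂ A] [CompleteSpace A]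
    (P : A) (ξ : ℂ) (h : ‖P ^ 2 - P‖ < ‖ξ ^ 2 - ξ‖) :
    HasSum (fun n : ℕ => ((ξ ^ 2 - ξ)⁻¹) ^ (n + 1) • (((ξ - 1) • (1 : A) + P) * (P ^ 2 - P) ^ n))
      (Ring.inverse (ξ • (1 : A) - P)) := by
  set μ : ℂ := ξ ^ 2 - ξ with hμ
  have hμ0 : μ ≠ 0 := by
    intro h0
    rw [h0, norm_zero] at h
    exact (norm_nonneg _).not_gt h
  set D : A := P ^ 2 - P with hD
  set t : A := μ⁻¹ • D with ht
  have htn : ‖t‖ < 1 := by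
    rw [ht, norm_smul, norm_inv]
    have hμpos : 0 < ‖μ‖ := by
      simpa using hμ0
    rw [inv_mul_lt_iff₀ hμpos, mul_one]
    exact h
  have hsum : HasSum (fun n : ℕ => t ^ n) (∑' n : ℕ, t ^ n) :=
    (summable_geometric_of_norm_lt_one htn).hasSum
  set S : A := ∑' n : ℕ, t ^ n with hS
  set B : A := ξ • (1 : A) - P with hB
  set N : A := (ξ - 1) • (1 : A) + P with hN
  have hBA : B * N = μ • (1 : A) - D := by
    rw [hB, hN, hD, hμ]
    simp only [mul_add, sub_mul, add_mul, mul_sub, smul_mul_assoc, mul_smul_comm, one_mul,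
      mul_one, smul_smul, pow_two]
    match_scalars <;> ring
  have hAB : N * B = μ • (1 : A) - D := by
    rw [hB, hN, hD, hμ]
    simp only [mul_add, sub_mul, add_mul, mul_sub, smul_mul_assoc, mul_smul_comm, one_mul,
      mul_one, smul_smul, pow_two]
    match_scalars <;> ring
  have hfac : μ • (1 : A) - D = μ • ((1 : A) - t) := by
    rw [smul_sub, ht, smul_smul, mul_inv_cancel₀ hμ0, one_smul]
  have hMS : (μ • (1 : A) - D) * (μ⁻¹ • S) = 1 := by
    rw [hfac, smul_mul_assoc, mul_smul_comm, smul_smul, mul_inv_cancel₀ hμ0, one_smul,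
      hS, mul_neg_geom_series t htn]
  have hSM : (μ⁻¹ • S) * (μ • (1 : A) - D) = 1 := by
    rw [hfac, smul_mul_assoc, mul_smul_comm, smul_smul, inv_mul_cancel₀ hμ0, one_smul,
      hS, geom_series_mul_neg t htn]
  have hcommBD : Commute B D := by
    rw [hB, hD]
    exact ((Commute.one_left (P ^ 2 - P)).smul_left ξ).sub_left
      (((Commute.refl P).pow_right 2).sub_right (Commute.refl P))
  have hcommBS : Commute B (μ⁻¹ • S) := by
    refine (Commute.tsum_right B fun n => ?_).smul_right μ⁻¹
    exact (hcommBD.smul_right μ⁻¹).pow_right n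
  -- B has two-sided inverse N * (μ⁻¹ • S)
  have h1 : B * (N * (μ⁻¹ • S)) = 1 := by rw [← mul_assoc, hBA, hMS]
  have h2 : (N * (μ⁻¹ • S)) * B = 1 := by
    rw [mul_assoc, ← hcommBS.eq, ← mul_assoc, hAB, hMS]
  have hinv : Ring.inverse B = N * (μ⁻¹ • S) :=
    Ring.inverse_unit ⟨B, N * (μ⁻¹ • S), h1, h2⟩
  rw [hinv]
  have h3 : HasSum (fun n : ℕ => N * (μ⁻¹ • t ^ n)) (N * (μ⁻¹ • S)) :=
    (hsum.const_smul μ⁻¹).mul_left N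
  convert h3 using 2 with n
  rw [ht, smul_pow]
  simp only [mul_smul_comm, smul_smul, pow_succ']

open Complex Metric

lemma aux_lb {z : ℂ} {r : ℝ} (h : ‖z - 1‖ ≤ r) : 1 - r ≤ ‖z‖ := by
  have h1 := norm_sub_norm_le (1 : ℂ) (1 - z)
  have h2 : ‖(1:ℂ) - z‖ = ‖z - 1‖ := norm_sub_rev _ _
  simp only [norm_one, sub_sub_cancel] at h1
  linarith

lemma aux_ne {z : ℂ} {ε : ℝ} (hε0 : 0 < ε) (hε : ε < 1/4)
    (h1 : 2*ε ≤ ‖z - 1‖) (h2 : ‖z - 1‖ ≤ 1/2) : z ≠ 0 ∧ z ≠ 1 := by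
  constructor
  · intro h
    have := aux_lb h2
    rw [h, norm_zero] at this; linarith
  · intro h
    rw [h, sub_self, norm_zero] at h1; linarith

lemma aux_circle_bound {g : ℂ → ℂ} {C ε : ℝ} (hε0 : 0 < ε) (hε : ε < 1/4) (hC : 0 ≤ C)
    (hd : ∀ ξ : ℂ, ξ ≠ 0 → ξ ≠ 1 → DifferentiableAt ℂ g ξ)
    (hb : ∀ ξ : ℂ, ‖ξ - 1‖ = 1/2 → ‖g ξ‖ ≤ C) :
    ‖∮ ξ in C(1, 2*ε), g ξ‖ ≤ Real.pi * C := by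
  have h2ε : 0 < 2*ε := by linarith
  have hle : 2*ε ≤ 1/2 := by linarith
  have heq : (∮ ξ in C(1, (1:ℝ)/2), g ξ) = ∮ ξ in C(1, 2*ε), g ξ := by
    refine circleIntegral_eq_of_differentiable_on_annulus_off_countable h2ε hle
      Set.countable_empty ?_ ?_
    · intro z hz
      obtain ⟨hz1, hz2⟩ := hz
      rw [mem_closedBall, Complex.dist_eq] at hz1
      rw [mem_ball, Complex.dist_eq, not_lt] at hz2
      obtain ⟨h0, h1⟩ := aux_ne hε0 hε hz2 hz1
      exact ((hd z h0 h1).continuousAt).continuousWithinAt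
    · intro z hz
      obtain ⟨⟨hz1, hz2⟩, -⟩ := hz
      rw [mem_ball, Complex.dist_eq] at hz1
      rw [mem_closedBall, Complex.dist_eq, not_le] at hz2
      obtain ⟨h0, h1⟩ := aux_ne hε0 hε hz2.le hz1.le
      exact hd z h0 h1
  rw [← heq]
  have hb' : ∀ z ∈ sphere (1:ℂ) (1/2), ‖g z‖ ≤ C := by
    intro z hz
    rw [mem_sphere_iff_norm] at hz
    exact hb z hz
  have := circleIntegral.norm_integral_le_of_norm_le_const (c := (1:ℂ)) (R := (1:ℝ)/2)
    (by norm_num) hb'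
  calc ‖∮ ξ in C(1, (1:ℝ)/2), g ξ‖ ≤ 2 * Real.pi * (1/2) * C := this
    _ = Real.pi * C := by ring

-- real arithmetic bounds
lemma aux_real1 {a : ℝ} (ha : 1/2 ≤ a) (n : ℕ) :
    (1/2) * ((a * (1/2))⁻¹) ^ (n+1) ≤ 2 * 4 ^ n := by
  have ha0 : 0 < a := by linarith
  have h4 : (a * (1/2))⁻¹ ≤ 4 := by
    rw [inv_eq_one_div, div_le_iff₀ (by positivity)]; linarith
  have h40 : (0:ℝ) ≤ (a * (1/2))⁻¹ := by positivity
  have := pow_le_pow_left₀ h40 h4 (n+1)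
  calc (1/2) * ((a * (1/2))⁻¹) ^ (n+1) ≤ (1/2) * 4 ^ (n+1) := by linarith
    _ = 2 * 4 ^ n := by rw [pow_succ]; ring

lemma aux_real2 {a : ℝ} (ha : 1/2 ≤ a) (n : ℕ) :
    a * ((a * (1/2))⁻¹) ^ (n+1) ≤ 2 * 4 ^ n := by
  have ha0 : 0 < a := by linarith
  have hinv : a⁻¹ ≤ 2 := by rw [inv_eq_one_div, div_le_iff₀ ha0]; linarith
  have hinv0 : (0:ℝ) ≤ a⁻¹ := by positivity
  have hsplit : (a * (1/2))⁻¹ = a⁻¹ * 2 := by rw [mul_inv]; norm_num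
  have key : a * (a⁻¹) ^ (n+1) = (a⁻¹) ^ n := by
    rw [pow_succ', ← mul_assoc, mul_inv_cancel₀ ha0.ne', one_mul]
  calc a * ((a * (1/2))⁻¹) ^ (n+1) = a * ((a⁻¹) ^ (n+1) * 2 ^ (n+1)) := by
        rw [hsplit, mul_pow]
    _ = (a⁻¹) ^ n * 2 ^ (n+1) := by rw [← mul_assoc, key]
    _ ≤ 2 ^ n * 2 ^ (n+1) := by
        have := pow_le_pow_left₀ hinv0 hinv n
        have h2 : (0:ℝ) ≤ 2 ^ (n+1) := by positivity
        exact mul_le_mul_of_nonneg_right this h2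
    _ = 2 * 4 ^ n := by rw [show (4:ℝ) = 2*2 by norm_num, mul_pow, pow_succ]; ring

lemma aux_diff_inv {ξ : ℂ} (h0 : ξ ≠ 0) (h1 : ξ ≠ 1) (n : ℕ) :
    DifferentiableAt ℂ (fun ξ : ℂ => ((ξ^2 - ξ)⁻¹) ^ (n+1)) ξ := by
  have hne : ξ^2 - ξ ≠ 0 := by
    have : ξ^2 - ξ = ξ * (ξ - 1) := by ring
    rw [this]
    exact mul_ne_zero h0 (sub_ne_zero.mpr h1)
  exact ((((differentiableAt_fun_id (x := ξ) (𝕜 := ℂ)).pow 2).sub differentiableAt_fun_id).inv hne).pow (n+1)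

lemma aux_bound1 {ε : ℝ} (hε0 : 0 < ε) (hε : ε < 1/4) (n : ℕ) :
    ‖∮ ξ in C(1, 2*ε), (ξ - 1) * ((ξ^2 - ξ)⁻¹) ^ (n+1)‖ ≤ Real.pi * (2 * 4 ^ n) := by
  refine aux_circle_bound hε0 hε (by positivity) ?_ ?_
  · intro ξ h0 h1
    exact (differentiableAt_id.sub_const 1).mul (aux_diff_inv h0 h1 n)
  · intro ξ hb
    have ha := aux_lb (le_of_eq hb)
    have h2 : 1/2 ≤ ‖ξ‖ := by linarith
    have hfac : ξ^2 - ξ = ξ * (ξ - 1) := by ring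
    rw [norm_mul, norm_pow, norm_inv, hfac, norm_mul, hb]
    exact aux_real1 h2 n

lemma aux_bound2 {ε : ℝ} (hε0 : 0 < ε) (hε : ε < 1/4) (n : ℕ) :
    ‖∮ ξ in C(1, 2*ε), ξ * ((ξ^2 - ξ)⁻¹) ^ (n+1)‖ ≤ Real.pi * (2 * 4 ^ n) := by
  refine aux_circle_bound hε0 hε (by positivity) ?_ ?_
  · intro ξ h0 h1
    exact differentiableAt_id.mul (aux_diff_inv h0 h1 n)
  · intro ξ hb
    have ha := aux_lb (le_of_eq hb)
    have h2 : 1/2 ≤ ‖ξ‖ := by linarith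
    have hfac : ξ^2 - ξ = ξ * (ξ - 1) := by ring
    rw [norm_mul, norm_pow, norm_inv, hfac, norm_mul, hb]
    exact aux_real2 h2 n

lemma aux_sphere_props {ε : ℝ} (hε0 : 0 < ε) (hε : ε < 1/4) {ξ : ℂ}
    (hξ : ξ ∈ Metric.sphere (1:ℂ) (2*ε)) :
    ξ ≠ 0 ∧ ξ ≠ 1 ∧ ξ^2 - ξ ≠ 0 ∧ ‖ξ - 1‖ = 2*ε ∧ 1 - 2*ε ≤ ‖ξ‖ := by
  rw [mem_sphere_iff_norm] at hξ
  obtain ⟨h0, h1⟩ := aux_ne hε0 hε (le_of_eq hξ.symm) (by rw [hξ]; linarith)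
  refine ⟨h0, h1, ?_, hξ, aux_lb (le_of_eq hξ)⟩
  have : ξ^2 - ξ = ξ * (ξ - 1) := by ring
  rw [this]
  exact mul_ne_zero h0 (sub_ne_zero.mpr h1)

lemma aux_cont_inv {ε : ℝ} (hε0 : 0 < ε) (hε : ε < 1/4) (n : ℕ) :
    ContinuousOn (fun ξ : ℂ => ((ξ^2 - ξ)⁻¹) ^ (n+1)) (Metric.sphere (1:ℂ) (2*ε)) := by
  refine ContinuousOn.pow ?_ (n+1)
  refine ContinuousOn.inv₀ ?_ ?_
  · exact ((continuousOn_id.pow 2).sub continuousOn_id)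
  · intro ξ hξ
    exact (aux_sphere_props hε0 hε hξ).2.2.1

lemma aux_val1 {ε : ℝ} (hε0 : 0 < ε) (hε : ε < 1/4) :
    (∮ ξ in C(1, 2*ε), (ξ - 1) * ((ξ^2 - ξ)⁻¹) ^ (0+1)) = 0 := by
  have h2ε : 0 < 2*ε := by linarith
  have hcongr : (∮ ξ in C(1, 2*ε), (ξ - 1) * ((ξ^2 - ξ)⁻¹) ^ (0+1))
      = ∮ ξ in C(1, 2*ε), ξ⁻¹ := by
    refine circleIntegral.integral_congr h2ε.le fun ξ hξ => ?_
    obtain ⟨h0, h1, hne, -, -⟩ := aux_sphere_props hε0 hε hξ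
    have hs : ξ - 1 ≠ 0 := sub_ne_zero.mpr h1
    have hfac : ξ^2 - ξ = ξ * (ξ - 1) := by ring
    simp only [zero_add, pow_one, hfac]
    field_simp
  rw [hcongr]
  refine Complex.circleIntegral_eq_zero_of_differentiable_on_off_countable h2ε.le
    Set.countable_empty ?_ ?_
  · refine ContinuousOn.inv₀ continuousOn_id ?_
    intro ξ hξ
    rw [Metric.mem_closedBall, Complex.dist_eq] at hξ
    intro h
    have := aux_lb (z := ξ) (r := 2*ε) hξ
    rw [h, norm_zero] at this
    linarith
  · intro ξ hξ
    obtain ⟨hξ, -⟩ := hξ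
    rw [Metric.mem_ball, Complex.dist_eq] at hξ
    refine differentiableAt_inv ?_
    intro h
    have := aux_lb (z := ξ) (r := 2*ε) hξ.le
    rw [h, norm_zero] at this
    linarith

lemma aux_val2 {ε : ℝ} (hε0 : 0 < ε) (hε : ε < 1/4) :
    (∮ ξ in C(1, 2*ε), ξ * ((ξ^2 - ξ)⁻¹) ^ (0+1)) = 2 * Real.pi * Complex.I := by
  have h2ε : 0 < 2*ε := by linarith
  have hcongr : (∮ ξ in C(1, 2*ε), ξ * ((ξ^2 - ξ)⁻¹) ^ (0+1))
      = ∮ ξ in C(1, 2*ε), (ξ - 1)⁻¹ := by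
    refine circleIntegral.integral_congr h2ε.le fun ξ hξ => ?_
    obtain ⟨h0, h1, hne, -, -⟩ := aux_sphere_props hε0 hε hξ
    have hfac : ξ^2 - ξ = ξ * (ξ - 1) := by ring
    have hs : ξ - 1 ≠ 0 := sub_ne_zero.mpr h1
    simp only [zero_add, pow_one, hfac]
    field_simp
  rw [hcongr]
  exact circleIntegral.integral_sub_inv_of_mem_ball (Metric.mem_ball_self h2ε)

lemma aux_integral_add {E : Type*} [NormedAddCommGroup E] [NormedSpace ℂ E] {f g : ℂ → E}
    {c : ℂ} {R : ℝ} (hf : CircleIntegrable f c R) (hg : CircleIntegrable g c R) :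
    (∮ z in C(c, R), (f z + g z)) = (∮ z in C(c, R), f z) + ∮ z in C(c, R), g z := by
  simp only [circleIntegral, smul_add, intervalIntegral.integral_add hf.out hg.out]

lemma aux_split {A : Type*} [NormedRing A] [NormedAlgebra ℂ A] [CompleteSpace A]
    (P : A) {ε : ℝ} (hε0 : 0 < ε) (hε : ε < 1/4) (n : ℕ) :
    (∮ ξ in C(1, 2*ε), ((ξ^2 - ξ)⁻¹) ^ (n+1) • (((ξ - 1) • (1:A) + P) * (P^2 - P) ^ n))
    = (∮ ξ in C(1, 2*ε), (ξ - 1) * ((ξ^2 - ξ)⁻¹) ^ (n+1)) • ((1 - P) * (P^2 - P) ^ n)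
      + (∮ ξ in C(1, 2*ε), ξ * ((ξ^2 - ξ)⁻¹) ^ (n+1)) • (P * (P^2 - P) ^ n) := by
  have h2ε : 0 < 2*ε := by linarith
  have hc1 : CircleIntegrable
      (fun ξ : ℂ => ((ξ - 1) * ((ξ^2 - ξ)⁻¹) ^ (n+1)) • ((1 - P) * (P^2 - P) ^ n)) 1 (2*ε) := by
    refine ContinuousOn.circleIntegrable h2ε.le ?_
    exact (((continuousOn_id.sub continuousOn_const).mul (aux_cont_inv hε0 hε n)).smul
      continuousOn_const)
  have hc2 : CircleIntegrable
      (fun ξ : ℂ => (ξ * ((ξ^2 - ξ)⁻¹) ^ (n+1)) • (P * (P^2 - P) ^ n)) 1 (2*ε) := by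
    refine ContinuousOn.circleIntegrable h2ε.le ?_
    exact ((continuousOn_id.mul (aux_cont_inv hε0 hε n)).smul continuousOn_const)
  rw [← circleIntegral.integral_smul_const, ← circleIntegral.integral_smul_const,
    ← aux_integral_add hc1 hc2]
  refine circleIntegral.integral_congr h2ε.le fun ξ _ => ?_
  simp only [add_mul, sub_mul, smul_mul_assoc, one_mul, smul_add, smul_sub, smul_smul]
  match_scalars <;> ring

/-- Distance from a quasi-idempotent to its Riesz projection: if `‖P² − P‖ < ε` with
`0 < ε < 1/4`, and `Θ(P) = (2πi)⁻¹ ∮_{|ξ−1|=2ε} (ξ·I − P)⁻¹ dξ`, then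
`‖Θ(P) − P‖ ≤ (4ε/(1 − 4ε))·(‖P‖ + ‖I − P‖ + 4ε)`. -/
theorem stmt8 {H : Type*} [NormedAddCommGroup H] [InnerProductSpace ℂ H] [CompleteSpace H]
    (P : H →L[ℂ] H) (ε : ℝ) (hε0 : 0 < ε) (hε : ε < 1 / 4)
    (hP : ‖P ^ 2 - P‖ < ε) :
    ‖(2 * Real.pi * Complex.I : ℂ)⁻¹ •
        (∮ ξ in C(1, 2 * ε), Ring.inverse (ξ • (1 : H →L[ℂ] H) - P)) - P‖ ≤
      4 * ε / (1 - 4 * ε) * (‖P‖ + ‖(1 : H →L[ℂ] H) - P‖ + 4 * ε) := by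
  have h2ε : 0 < 2*ε := by linarith
  have hm0 : 0 < (1 - 2*ε) * (2*ε) := by nlinarith
  have hDm : ‖P^2 - P‖ < (1 - 2*ε) * (2*ε) := by nlinarith
  -- facts about points on the circle
  have hsph : ∀ θ : ℝ, (1 - 2*ε) * (2*ε) ≤ ‖(circleMap 1 (2*ε) θ)^2 - circleMap 1 (2*ε) θ‖ := by
    intro θ
    obtain ⟨h0, h1, hne, habs, hlb⟩ :=
      aux_sphere_props hε0 hε (circleMap_mem_sphere 1 h2ε.le θ)
    set z := circleMap 1 (2*ε) θ
    have : z^2 - z = z * (z - 1) := by ring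
    rw [this, norm_mul, habs]
    have h0' : 0 ≤ ‖z - 1‖ := norm_nonneg _
    nlinarith [norm_nonneg z]
  have hnez : ∀ θ : ℝ, (circleMap 1 (2*ε) θ)^2 - circleMap 1 (2*ε) θ ≠ 0 := by
    intro θ h
    have := hsph θ
    rw [h, norm_zero] at this
    linarith
  -- Step A: the circle integral is the sum of the termwise integrals
  have key : HasSum
      (fun n : ℕ => ∮ ξ in C(1, 2*ε),
        ((ξ^2 - ξ)⁻¹) ^ (n+1) • (((ξ - 1) • (1 : H →L[ℂ] H) + P) * (P^2 - P) ^ n))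
      (∮ ξ in C(1, 2*ε), Ring.inverse (ξ • (1 : H →L[ℂ] H) - P)) := by
    refine intervalIntegral.hasSum_integral_of_dominated_convergence
      (bound := fun n _ => (2*ε * (((1 - 2*ε) * (2*ε))⁻¹ * (2*ε + ‖P‖))) *
        ((((1 - 2*ε) * (2*ε))⁻¹) * ‖P^2 - P‖) ^ n)
      ?_ ?_ ?_ ?_ ?_
    · intro n
      refine Continuous.aestronglyMeasurable ?_
      have hz : Continuous (circleMap 1 (2*ε)) := continuous_circleMap _ _
      have hinv : Continuous fun θ =>
          (((circleMap 1 (2*ε) θ)^2 - circleMap 1 (2*ε) θ)⁻¹) ^ (n+1) :=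
        (((hz.pow 2).sub hz).inv₀ hnez).pow (n+1)
      have hA : Continuous fun θ =>
          ((circleMap 1 (2*ε) θ - 1) • (1 : H →L[ℂ] H) + P) * (P^2 - P) ^ n :=
        (((hz.sub continuous_const).smul continuous_const).add continuous_const).mul
          continuous_const
      simp only [deriv_circleMap]
      exact ((continuous_circleMap 0 (2*ε)).mul continuous_const).smul (hinv.smul hA)
    · intro n
      refine Filter.Eventually.of_forall fun θ _ => ?_
      set z := circleMap 1 (2*ε) θ with hzdef
      obtain ⟨h0, h1, hne, habs, hlb⟩ :=
        aux_sphere_props hε0 hε (circleMap_mem_sphere 1 h2ε.le θ)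
      have hderiv : ‖deriv (circleMap 1 (2*ε)) θ‖ = 2*ε := by
        rw [deriv_circleMap, norm_mul, Complex.norm_I, mul_one]
        rw [norm_circleMap_zero, abs_of_pos h2ε]
      rw [norm_smul, hderiv, norm_smul, norm_pow, norm_inv]
      have hinv_le : ‖z^2 - z‖⁻¹ ≤ (((1 - 2*ε) * (2*ε))⁻¹) := inv_anti₀ hm0 (hsph θ)
      have hA1 : ‖(z - 1) • (1 : H →L[ℂ] H) + P‖ ≤ 2*ε + ‖P‖ := by
        refine (norm_add_le _ _).trans ?_
        have : ‖(z - 1) • (1 : H →L[ℂ] H)‖ ≤ 2*ε := by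
          rw [norm_smul, habs]
          calc 2*ε * ‖(1 : H →L[ℂ] H)‖ ≤ 2*ε * 1 :=
            mul_le_mul_of_nonneg_left ContinuousLinearMap.norm_id_le h2ε.le
          _ = 2*ε := mul_one _
        linarith
      have hDn : ‖(P^2 - P) ^ n‖ ≤ ‖P^2 - P‖ ^ n := by
        cases n with
        | zero => simp only [pow_zero]; exact ContinuousLinearMap.norm_id_le
        | succ k => exact norm_pow_le' _ k.succ_pos
      have hA_le : ‖((z - 1) • (1 : H →L[ℂ] H) + P) * (P^2 - P) ^ n‖ ≤
          (2*ε + ‖P‖) * ‖P^2 - P‖ ^ n :=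
        (norm_mul_le _ _).trans (mul_le_mul hA1 hDn (norm_nonneg _) (by positivity))
      calc 2*ε * (‖z^2 - z‖⁻¹ ^ (n+1) * ‖((z - 1) • (1 : H →L[ℂ] H) + P) * (P^2 - P) ^ n‖)
          ≤ 2*ε * ((((1 - 2*ε) * (2*ε))⁻¹) ^ (n+1) * ((2*ε + ‖P‖) * ‖P^2 - P‖ ^ n)) := by
            refine mul_le_mul_of_nonneg_left ?_ h2ε.le
            exact mul_le_mul (pow_le_pow_left₀ (by positivity) hinv_le (n+1)) hA_le
              (norm_nonneg _) (by positivity)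
        _ = (2*ε * (((1 - 2*ε) * (2*ε))⁻¹ * (2*ε + ‖P‖))) *
            ((((1 - 2*ε) * (2*ε))⁻¹) * ‖P^2 - P‖) ^ n := by
            rw [mul_pow, pow_succ']; ring
    · refine Filter.Eventually.of_forall fun θ _ => ?_
      refine Summable.mul_left _ ?_
      refine summable_geometric_of_lt_one (by positivity) ?_
      rw [mul_comm, ← div_eq_mul_inv, div_lt_one hm0]
      exact hDm
    · exact intervalIntegrable_const
    · refine Filter.Eventually.of_forall fun θ _ => ?_
      refine HasSum.const_smul _ ?_
      refine aux_resolvent P (circleMap 1 (2*ε) θ) ?_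
      exact hDm.trans_le (hsph θ)
  -- value of the 0-th term
  have hI0 : (∮ ξ in C(1, 2*ε),
      ((ξ^2 - ξ)⁻¹) ^ (0+1) • (((ξ - 1) • (1 : H →L[ℂ] H) + P) * (P^2 - P) ^ 0))
      = (2 * Real.pi * Complex.I : ℂ) • P := by
    rw [aux_split P hε0 hε 0, aux_val1 hε0 hε, aux_val2 hε0 hε]
    simp
  have key' := (hasSum_nat_add_iff' 1).mpr key
  simp only [Finset.range_one, Finset.sum_singleton] at key'
  rw [hI0] at key'
  -- per-term bounds for n ≥ 1
  have hterm : ∀ n : ℕ, ‖(∮ ξ in C(1, 2*ε),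
      ((ξ^2 - ξ)⁻¹) ^ (n+1+1) • (((ξ - 1) • (1 : H →L[ℂ] H) + P) * (P^2 - P) ^ (n+1)))‖ ≤
      (2*Real.pi*((‖P‖ + ‖(1 : H →L[ℂ] H) - P‖) * (4*ε))) * (4*ε)^n := by
    intro n
    rw [aux_split P hε0 hε (n+1)]
    refine (norm_add_le _ _).trans ?_
    rw [norm_smul, norm_smul]
    have hDpow : ‖(P^2 - P) ^ (n+1)‖ ≤ ε ^ (n+1) :=
      (norm_pow_le' _ n.succ_pos).trans (pow_le_pow_left₀ (norm_nonneg _) hP.le _)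
    have hC1 : ‖((1 : H →L[ℂ] H) - P) * (P^2 - P) ^ (n+1)‖ ≤
        ‖(1 : H →L[ℂ] H) - P‖ * ε ^ (n+1) :=
      (norm_mul_le _ _).trans (mul_le_mul_of_nonneg_left hDpow (norm_nonneg _))
    have hC2 : ‖P * (P^2 - P) ^ (n+1)‖ ≤ ‖P‖ * ε ^ (n+1) :=
      (norm_mul_le _ _).trans (mul_le_mul_of_nonneg_left hDpow (norm_nonneg _))
    have hb1 := aux_bound1 hε0 hε (n+1)
    have hb2 := aux_bound2 hε0 hε (n+1)
    calc ‖∮ ξ in C(1, 2*ε), (ξ - 1) * ((ξ^2 - ξ)⁻¹) ^ (n+1+1)‖ *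
          ‖((1 : H →L[ℂ] H) - P) * (P^2 - P) ^ (n+1)‖
        + ‖∮ ξ in C(1, 2*ε), ξ * ((ξ^2 - ξ)⁻¹) ^ (n+1+1)‖ * ‖P * (P^2 - P) ^ (n+1)‖
        ≤ (Real.pi * (2 * 4 ^ (n+1))) * (‖(1 : H →L[ℂ] H) - P‖ * ε ^ (n+1))
          + (Real.pi * (2 * 4 ^ (n+1))) * (‖P‖ * ε ^ (n+1)) := by
          refine add_le_add ?_ ?_
          · exact mul_le_mul hb1 hC1 (norm_nonneg _) (by positivity)
          · exact mul_le_mul hb2 hC2 (norm_nonneg _) (by positivity)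
      _ = (2*Real.pi*((‖P‖ + ‖(1 : H →L[ℂ] H) - P‖) * (4*ε))) * (4*ε)^n := by
          rw [mul_pow, pow_succ 4 n, pow_succ ε n]; ring
  have h14 : 0 < 1 - 4*ε := by linarith
  have hgeom : HasSum
      (fun n : ℕ => (2*Real.pi*((‖P‖ + ‖(1 : H →L[ℂ] H) - P‖) * (4*ε))) * (4*ε)^n)
      ((2*Real.pi*((‖P‖ + ‖(1 : H →L[ℂ] H) - P‖) * (4*ε))) * (1 - 4*ε)⁻¹) :=
    (hasSum_geometric_of_lt_one (by positivity) (by linarith)).mul_left _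
  have hnorm := tsum_of_norm_bounded hgeom hterm
  rw [key'.tsum_eq] at hnorm
  -- final computation
  have h2piI : (2 * (Real.pi:ℂ) * Complex.I) ≠ 0 :=
    mul_ne_zero (mul_ne_zero two_ne_zero
      (Complex.ofReal_ne_zero.mpr Real.pi_ne_zero)) Complex.I_ne_zero
  rw [show (2 * (Real.pi:ℂ) * Complex.I)⁻¹ •
        (∮ ξ in C(1, 2 * ε), Ring.inverse (ξ • (1 : H →L[ℂ] H) - P)) - P
      = (2 * (Real.pi:ℂ) * Complex.I)⁻¹ •
        ((∮ ξ in C(1, 2 * ε), Ring.inverse (ξ • (1 : H →L[ℂ] H) - P))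
          - (2 * Real.pi * Complex.I : ℂ) • P) from by
    rw [smul_sub, smul_smul, inv_mul_cancel₀ h2piI, one_smul]]
  rw [norm_smul]
  have habs : ‖(2 * (Real.pi:ℂ) * Complex.I)⁻¹‖ = (2*Real.pi)⁻¹ := by
    rw [norm_inv]
    congr 1
    rw [norm_mul, norm_mul, Complex.norm_I, Complex.norm_two, Complex.norm_real,
      Real.norm_eq_abs, abs_of_pos Real.pi_pos, mul_one]
  rw [habs]
  have hpi : 0 < 2*Real.pi := by positivity
  calc (2*Real.pi)⁻¹ * ‖(∮ ξ in C(1, 2 * ε), Ring.inverse (ξ • (1 : H →L[ℂ] H) - P))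
          - (2 * Real.pi * Complex.I : ℂ) • P‖
      ≤ (2*Real.pi)⁻¹ * ((2*Real.pi*((‖P‖ + ‖(1 : H →L[ℂ] H) - P‖) * (4*ε))) * (1 - 4*ε)⁻¹) :=
        mul_le_mul_of_nonneg_left hnorm (by positivity)
    _ = ((‖P‖ + ‖(1 : H →L[ℂ] H) - P‖) * (4*ε)) * (1 - 4*ε)⁻¹ := by
        field_simp
    _ ≤ 4 * ε / (1 - 4 * ε) * (‖P‖ + ‖(1 : H →L[ℂ] H) - P‖ + 4 * ε) := by
        rw [div_eq_mul_inv]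
        have hc : 0 < (1 - 4*ε)⁻¹ := inv_pos.mpr h14
        nlinarith [norm_nonneg P, norm_nonneg ((1 : H →L[ℂ] H) - P),
          mul_pos (mul_pos (show (0:ℝ) < 4*ε by linarith) hc) (show (0:ℝ) < 4*ε by linarith)]
end

section
/- Let ε > 0, r > 0, and let T be a real number with 0 < T < (1+ε)π/(2r). Let f : ℝ → ℝ be differentiable on [0, T] with f(0) = 0, and suppose that for every x ∈ [0, T] one has 0 ≤ (1+ε)·f'(x) ≤ f(x)² + r². Then f(x) ≤ r·tan(r x/(1+ε)) for every x ∈ [0, T]. -/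
open Real Set
open Topology Filter

/-- ODE comparison: if `0 < T < (1+ε)π/(2r)`, `f(0) = 0`, `f` is differentiable on
`[0, T]` with derivative `f'` satisfying `0 ≤ (1+ε)·f'(x) ≤ f(x)² + r²` there, then
`f(x) ≤ r·tan(r x/(1+ε))` on `[0, T]`. -/
theorem stmt13 (ε r T : ℝ) (hε : 0 < ε) (hr : 0 < r)
    (hT0 : 0 < T) (hT : T < (1 + ε) * Real.pi / (2 * r))
    (f f' : ℝ → ℝ) (hf0 : f 0 = 0)
    (hderiv : ∀ x ∈ Icc (0 : ℝ) T, HasDerivWithinAt f (f' x) (Icc (0 : ℝ) T) x)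
    (hbound : ∀ x ∈ Icc (0 : ℝ) T,
      0 ≤ (1 + ε) * f' x ∧ (1 + ε) * f' x ≤ f x ^ 2 + r ^ 2) :
    ∀ x ∈ Icc (0 : ℝ) T, f x ≤ r * Real.tan (r * x / (1 + ε)) := by
  have hε1 : (0:ℝ) < 1 + ε := by linarith
  have hrT : r * T < (1 + ε) * (Real.pi / 2) := by
    rw [lt_div_iff₀ (by positivity)] at hT
    nlinarith
  have hcontf : ContinuousOn f (Icc (0:ℝ) T) :=
    fun x hx => (hderiv x hx).continuousWithinAt
  have hf'Ici : ∀ x ∈ Ico (0:ℝ) T, HasDerivWithinAt f (f' x) (Ici x) x := by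
    intro x hx
    apply (hderiv x ⟨hx.1, hx.2.le⟩).mono_of_mem_nhdsWithin
    have h1 : Ici x ∩ Iio T ∈ 𝓝[Ici x] x :=
      Filter.inter_mem self_mem_nhdsWithin
        (mem_nhdsWithin_of_mem_nhds (Iio_mem_nhds hx.2))
    refine Filter.mem_of_superset h1 ?_
    rintro y ⟨hy1, hy2⟩
    exact ⟨le_trans hx.1 hy1, hy2.le⟩
  have key : ∀ s : ℝ, r < s → s * T < (1 + ε) * (Real.pi / 2) →
      ∀ x ∈ Icc (0:ℝ) T, f x ≤ s * Real.tan (s * x / (1 + ε)) := by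
    intro s hrs hsT
    have hs : 0 < s := hr.trans hrs
    have hcos : ∀ x ∈ Icc (0:ℝ) T, 0 < Real.cos (s * x / (1 + ε)) := by
      intro x hx
      apply Real.cos_pos_of_mem_Ioo
      constructor
      · have : 0 ≤ s * x / (1 + ε) := div_nonneg (by nlinarith [hx.1]) hε1.le
        linarith [Real.pi_pos]
      · rw [div_lt_iff₀ hε1]
        have : s * x ≤ s * T := by nlinarith [hx.2]
        nlinarith
    set B : ℝ → ℝ := fun x => s * Real.tan (s * x / (1 + ε)) with hB
    set B' : ℝ → ℝ := fun x => (B x ^ 2 + s ^ 2) / (1 + ε) with hB'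
    have hBderiv : ∀ x ∈ Icc (0:ℝ) T, HasDerivAt B (B' x) x := by
      intro x hx
      have hc := (hcos x hx).ne'
      have h1 : HasDerivAt (fun y : ℝ => s * y / (1 + ε)) (s / (1 + ε)) x := by
        simpa using ((hasDerivAt_id x).const_mul s).div_const (1 + ε)
      have h2 := ((Real.hasDerivAt_tan hc).comp x h1).const_mul s
      convert h2 using 1
      · rfl
      · rfl
      · rfl
      have hsin := Real.sin_sq_add_cos_sq (s * x / (1 + ε))
      have key2 : (s * Real.tan (s * x / (1 + ε))) ^ 2 + s ^ 2
          = s ^ 2 * (1 / Real.cos (s * x / (1 + ε)) ^ 2) := by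
        rw [Real.tan_eq_sin_div_cos]
        field_simp
        linear_combination hsin
      show ((s * Real.tan (s * x / (1 + ε))) ^ 2 + s ^ 2) / (1 + ε) = _
      rw [key2]
      ring
    have hBcont : ContinuousOn B (Icc (0:ℝ) T) :=
      fun x hx => (hBderiv x hx).continuousAt.continuousWithinAt
    have hB'Ici : ∀ x ∈ Ico (0:ℝ) T, HasDerivWithinAt B (B' x) (Ici x) x :=
      fun x hx => (hBderiv x ⟨hx.1, hx.2.le⟩).hasDerivWithinAt
    have ha : f 0 ≤ B 0 := by simp [hB, hf0]
    have bound : ∀ x ∈ Ico (0:ℝ) T, f x = B x → f' x < B' x := by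
      intro x hx hfB
      have h := (hbound x ⟨hx.1, hx.2.le⟩).2
      have hr2 : r ^ 2 < s ^ 2 := by nlinarith
      simp only [hB']
      rw [← hfB, lt_div_iff₀ hε1]
      nlinarith
    exact fun x hx =>
      image_le_of_deriv_right_lt_deriv_boundary' hcontf hf'Ici ha hBcont hB'Ici bound hx
  intro x hx
  have hxT : r * x ≤ r * T := by nlinarith [hx.2]
  have hR : r < (1 + ε) * Real.pi / (2 * T) := by
    rw [lt_div_iff₀ (by positivity)]
    nlinarith
  have hmem : Ioo r ((1 + ε) * Real.pi / (2 * T)) ∈ 𝓝[>] r :=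
    Ioo_mem_nhdsGT_of_mem ⟨le_refl r, hR⟩
  have hev : ∀ᶠ s in 𝓝[>] r, f x ≤ s * Real.tan (s * x / (1 + ε)) := by
    filter_upwards [hmem] with s hs
    have : s * T < (1 + ε) * (Real.pi / 2) := by
      have := hs.2
      rw [lt_div_iff₀ (by positivity)] at this
      nlinarith
    exact key s hs.1 this x hx
  have hcne : Real.cos (r * x / (1 + ε)) ≠ 0 := by
    apply (Real.cos_pos_of_mem_Ioo _).ne'
    constructor
    · have : 0 ≤ r * x / (1 + ε) := div_nonneg (by nlinarith [hx.1]) hε1.le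
      linarith [Real.pi_pos]
    · rw [div_lt_iff₀ hε1]; nlinarith
  have hcont : Filter.Tendsto (fun s => s * Real.tan (s * x / (1 + ε))) (𝓝[>] r)
      (𝓝 (r * Real.tan (r * x / (1 + ε)))) := by
    apply Filter.Tendsto.mono_left _ nhdsWithin_le_nhds
    have h1 : ContinuousAt (fun s : ℝ => s * x / (1 + ε)) r :=
      (continuousAt_id.mul continuousAt_const).div_const _
    have h2 : ContinuousAt Real.tan (r * x / (1 + ε)) := Real.continuousAt_tan.2 hcne
    have h4 := ContinuousAt.comp (x := r) h2 h1
    have h3 : ContinuousAt (fun s : ℝ => s * Real.tan (s * x / (1 + ε))) r :=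
      continuousAt_id.mul h4
    exact h3.tendsto
  exact ge_of_tendsto hcont hev
end
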